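/- arXiv:1708.08034 — 3 statements merged into one kernel-verified Lean document; each statement's English description precedes it below -/
import Mathlib

section
/- Let M be an associative ℂ-algebra, E : M → ℂ a linear functional, and let W_n : M^n → Γ(M) be the multilinear maps determined by W() = 1 and the recursion W(a₁,…,a_{n+1}) = W(a₁,…,a_n)·X(a_{n+1}) − Σ_{i=1}^n E(a_i a_{n+1})·W(a₁,…,â_i,…,a_n). Then for all a₁,…,a_n ∈ M: W(a₁,…,a_n) = Σ_{π ∈ P_{1,2}(n)} (−1)^{|Pair(π)|} (Π_{{i<j} ∈ Pair(π)} E(a_i a_j)) · X(a_{v₁})X(a_{v₂})⋯X(a_{v_m}), where {v₁},…,{v_m} are the singleton blocks of π with v₁ < … < v_m. -/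
open Finset
open scoped Classical

noncomputable section

/-- A partition of `Fin n`, given by its (finite) set of blocks. -/
def IsPartition {n : ℕ} (P : Finset (Finset (Fin n))) : Prop :=
  (∀ B ∈ P, B.Nonempty) ∧ ∀ i : Fin n, ∃! B : Finset (Fin n), B ∈ P ∧ i ∈ B

/-- For `U = {i₁ < … < iₘ}`, the ordered product `a_{i₁} ⋯ a_{iₘ}`. -/
def aProd {M : Type*} [Ring M] {n : ℕ} (a : Fin n → M) (B : Finset (Fin n)) : M :=
  ((B.sort (· ≤ ·)).map a).prod

/-- The elements of `Fin n` forming singleton blocks of `P`, in increasing order. -/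
def singL {n : ℕ} (P : Finset (Finset (Fin n))) : List (Fin n) :=
  (Finset.univ.filter fun i : Fin n => ({i} : Finset (Fin n)) ∈ P).sort (· ≤ ·)

namespace Stmt8

lemma sort_map {k N : ℕ} {f : Fin k → Fin N} (hf : StrictMono f) (s : Finset (Fin k)) :
    (s.image f).sort (· ≤ ·) = (s.sort (· ≤ ·)).map f := by
  haveI : IsAntisymm (Fin N) (· < ·) := ⟨fun a b h h' => absurd h' (asymm h)⟩
  refine (fun hp h1 h2 => List.Perm.eq_of_pairwise' (r := (· < ·)) h1 h2 hp) ?_ ?_ ?_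
  · rw [← Multiset.coe_eq_coe]
    have h1 : ((s.image f).sort (· ≤ ·) : Multiset (Fin N)) = (s.image f).val :=
      Finset.sort_eq _ _
    have h2 : (s.image f).val = s.val.map f := by
      rw [Finset.image_val, Multiset.dedup_eq_self.2 (s.nodup.map hf.injective)]
    have h3 : ((s.sort (· ≤ ·)).map f : Multiset (Fin N)) = s.val.map f := by
      rw [← Multiset.map_coe, Finset.sort_eq]
    rw [h1, h2, h3]
  · exact (Finset.sortedLT_sort _).pairwise
  · exact (Finset.sortedLT_sort s).pairwise.map _ (fun {x y} h => hf h)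

lemma sort_insert_max {N : ℕ} {s : Finset (Fin N)} {c : Fin N}
    (h : ∀ b ∈ s, b < c) :
    (insert c s).sort (· ≤ ·) = s.sort (· ≤ ·) ++ [c] := by
  haveI : IsAntisymm (Fin N) (· < ·) := ⟨fun a b h h' => absurd h' (asymm h)⟩
  have hc : c ∉ s := fun hc => lt_irrefl c (h c hc)
  refine (fun hp h1 h2 => List.Perm.eq_of_pairwise' (r := (· < ·)) h1 h2 hp) ?_ ?_ ?_
  · rw [← Multiset.coe_eq_coe]
    have h1 : ((insert c s).sort (· ≤ ·) : Multiset (Fin N)) = (insert c s).val :=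
      Finset.sort_eq _ _
    rw [h1, Finset.insert_val, Multiset.ndinsert_of_notMem hc]
    have h3 : ((s.sort (· ≤ ·) ++ [c] : List (Fin N)) : Multiset (Fin N))
        = s.val + {c} := by
      rw [← Multiset.coe_add, Finset.sort_eq]; rfl
    rw [h3, add_comm, Multiset.singleton_add]
  · exact (Finset.sortedLT_sort _).pairwise
  · rw [List.pairwise_append]
    refine ⟨(Finset.sortedLT_sort _).pairwise, List.pairwise_singleton _ c, ?_⟩
    intro x hx y hy
    rw [List.mem_singleton] at hy
    subst hy
    exact h x ((Finset.mem_sort _).1 hx)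

lemma blocks_eq {n : ℕ} {π : Finset (Finset (Fin n))} (h : IsPartition π)
    {B B' : Finset (Fin n)} (hB : B ∈ π) (hB' : B' ∈ π) {i : Fin n}
    (hi : i ∈ B) (hi' : i ∈ B') : B = B' := by
  obtain ⟨D, _, hD⟩ := h.2 i
  rw [hD B ⟨hB, hi⟩, hD B' ⟨hB', hi'⟩]

lemma sort_pair {N : ℕ} {x y : Fin N} (h : x < y) :
    ({x, y} : Finset (Fin N)).sort (· ≤ ·) = [x, y] := by
  have : ({x, y} : Finset (Fin N)) = insert y {x} := by
    rw [Finset.pair_comm]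
  rw [this, sort_insert_max (by simpa using h), Finset.sort_singleton]
  rfl

def P12 (n : ℕ) : Finset (Finset (Finset (Fin n))) :=
  Finset.univ.filter (fun π : Finset (Finset (Fin n)) =>
    IsPartition π ∧ ∀ B ∈ π, B.card = 1 ∨ B.card = 2)

variable {M : Type*} [Ring M] [Algebra ℂ M]

def coefE (E : M →ₗ[ℂ] ℂ) {n : ℕ} (a : Fin n → M) (π : Finset (Finset (Fin n))) : ℂ :=
  (-1 : ℂ) ^ (π.filter fun B => B.card = 2).card
    * ∏ B ∈ π.filter fun B => B.card = 2, E (aProd a B)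

def word {n : ℕ} (a : Fin n → M) (π : Finset (Finset (Fin n))) : TensorAlgebra ℂ M :=
  ((singL π).map fun v => TensorAlgebra.ι ℂ (a v)).prod

def R (E : M →ₗ[ℂ] ℂ) (n : ℕ) (a : Fin n → M) : TensorAlgebra ℂ M :=
  ∑ π ∈ P12 n, coefE E a π • word a π

section Transfer

variable {k N : ℕ} {f : Fin k → Fin N} {C : Finset (Fin N)}

/-- push a partition of `Fin k` forward along `f`, adding the extra block `C`. -/
def Phi (C : Finset (Fin N)) (f : Fin k → Fin N) (σ : Finset (Finset (Fin k))) :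
    Finset (Finset (Fin N)) :=
  insert C (σ.image (Finset.image f))

def Psi (C : Finset (Fin N)) (f : Fin k → Fin N) (hf : Function.Injective f)
    (π : Finset (Finset (Fin N))) : Finset (Finset (Fin k)) :=
  (π.erase C).image (fun B => B.preimage f hf.injOn)

variable (hf : StrictMono f) (hC : ∀ x : Fin N, x ∈ C ↔ ∀ j, f j ≠ x)

include hC in
lemma C_ne_image {B : Finset (Fin k)} (hB : B.Nonempty) : C ≠ B.image f := by
  intro h
  obtain ⟨j, hj⟩ := hB
  have : f j ∈ C := h ▸ Finset.mem_image_of_mem f hj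
  exact (hC (f j)).1 this j rfl

include hC in
lemma mem_image_of_not_mem_C {x : Fin N} (hx : x ∉ C) : ∃ j, f j = x := by
  by_contra h
  push_neg at h
  exact hx ((hC x).2 h)

include hf hC in
lemma Phi_isPartition {σ : Finset (Finset (Fin k))} (hσ : IsPartition σ)
    (hCne : C.Nonempty) : IsPartition (Phi C f σ) := by
  constructor
  · intro B hB
    rcases Finset.mem_insert.1 hB with h | h
    · exact h ▸ hCne
    · obtain ⟨B', hB', rfl⟩ := Finset.mem_image.1 h
      exact (hσ.1 B' hB').image f
  · intro i
    by_cases hi : i ∈ C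
    · refine ⟨C, ⟨Finset.mem_insert_self _ _, hi⟩, ?_⟩
      rintro B ⟨hB, hiB⟩
      rcases Finset.mem_insert.1 hB with h | h
      · exact h
      · obtain ⟨B', _, rfl⟩ := Finset.mem_image.1 h
        obtain ⟨j, _, rfl⟩ := Finset.mem_image.1 hiB
        exact (((hC (f j)).1 hi) j rfl).elim
    · obtain ⟨j, rfl⟩ := mem_image_of_not_mem_C hC hi
      obtain ⟨B, ⟨hB, hjB⟩, hBu⟩ := hσ.2 j
      refine ⟨B.image f, ⟨Finset.mem_insert_of_mem (Finset.mem_image_of_mem _ hB),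
        Finset.mem_image_of_mem _ hjB⟩, ?_⟩
      rintro B' ⟨hB', hjB'⟩
      rcases Finset.mem_insert.1 hB' with h | h
      · exact absurd (h ▸ hjB') hi
      · obtain ⟨B'', hB'', rfl⟩ := Finset.mem_image.1 h
        obtain ⟨j', hj', hjj⟩ := Finset.mem_image.1 hjB'
        cases hf.injective hjj
        rw [hBu B'' ⟨hB'', hj'⟩]

include hf hC in
lemma Phi_mem_P12 {σ : Finset (Finset (Fin k))} (hσ : σ ∈ P12 k)
    (hCcard : C.card = 1 ∨ C.card = 2) : Phi C f σ ∈ P12 N := by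
  rw [P12, Finset.mem_filter] at hσ ⊢
  refine ⟨Finset.mem_univ _, Phi_isPartition hf hC hσ.2.1
    (Finset.card_pos.1 (by rcases hCcard with h | h <;> omega)), ?_⟩
  intro B hB
  rcases Finset.mem_insert.1 hB with h | h
  · exact h ▸ hCcard
  · obtain ⟨B', hB', rfl⟩ := Finset.mem_image.1 h
    rw [Finset.card_image_of_injective _ hf.injective]
    exact hσ.2.2 B' hB'

include hC in
lemma block_subset_range {π : Finset (Finset (Fin N))} (hπ : IsPartition π)
    (hCπ : C ∈ π) {B : Finset (Fin N)} (hB : B ∈ π) (hBC : B ≠ C) :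
    ∀ x ∈ B, ∃ j, f j = x := by
  intro x hx
  apply mem_image_of_not_mem_C hC
  intro hxC
  exact hBC (blocks_eq hπ hB hCπ hx hxC)

include hC in
lemma image_preimage_of_mem {π : Finset (Finset (Fin N))} (hπ : IsPartition π)
    (hCπ : C ∈ π) {B : Finset (Fin N)} (hB : B ∈ π) (hBC : B ≠ C)
    (hfi : Function.Injective f) :
    (B.preimage f hfi.injOn).image f = B := by
  ext x
  simp only [Finset.mem_image, Finset.mem_preimage]
  constructor
  · rintro ⟨j, hj, rfl⟩; exact hj
  · intro hx
    obtain ⟨j, rfl⟩ := block_subset_range hC hπ hCπ hB hBC x hx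
    exact ⟨j, hx, rfl⟩

lemma preimage_image (hfi : Function.Injective f) (B : Finset (Fin k)) :
    (B.image f).preimage f hfi.injOn = B := by
  ext j
  simp [Finset.mem_preimage, hfi.eq_iff]

include hf hC in
lemma Psi_Phi {σ : Finset (Finset (Fin k))} (hσ : IsPartition σ) (hCne : C.Nonempty) :
    Psi C f hf.injective (Phi C f σ) = σ := by
  rw [Psi, Phi, Finset.erase_insert ?_]
  · rw [Finset.image_image]
    refine Finset.image_congr ?_ |>.trans (Finset.image_id)
    intro B _
    exact preimage_image hf.injective B
  · intro h
    obtain ⟨B, hB, hBC⟩ := Finset.mem_image.1 h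
    exact C_ne_image hC (hσ.1 B hB) hBC.symm

include hC in
lemma Phi_Psi {π : Finset (Finset (Fin N))} (hπ : IsPartition π) (hCπ : C ∈ π)
    (hfi : Function.Injective f) :
    Phi C f (Psi C f hfi π) = π := by
  rw [Psi, Phi, Finset.image_image]
  have h : (π.erase C).image (Finset.image f ∘ fun B => B.preimage f hfi.injOn)
      = π.erase C := by
    refine (Finset.image_congr ?_).trans Finset.image_id
    intro B hB
    exact image_preimage_of_mem hC hπ hCπ (Finset.mem_of_mem_erase hB)
      (Finset.ne_of_mem_erase hB) hfi
  rw [h, Finset.insert_erase hCπ]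

include hf hC in
lemma Psi_mem_P12 {π : Finset (Finset (Fin N))} (hπ : π ∈ P12 N) (hCπ : C ∈ π) :
    Psi C f hf.injective π ∈ P12 k := by
  rw [P12, Finset.mem_filter] at hπ ⊢
  obtain ⟨-, hpart, hcard⟩ := hπ
  have key : ∀ B ∈ π.erase C, (B.preimage f hf.injective.injOn).image f = B :=
    fun B hB => image_preimage_of_mem hC hpart hCπ (Finset.mem_of_mem_erase hB)
      (Finset.ne_of_mem_erase hB) hf.injective
  refine ⟨Finset.mem_univ _, ⟨?_, ?_⟩, ?_⟩
  · rintro B hB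
    obtain ⟨B', hB', rfl⟩ := Finset.mem_image.1 hB
    obtain ⟨x, hx⟩ := hpart.1 B' (Finset.mem_of_mem_erase hB')
    obtain ⟨j, rfl⟩ := block_subset_range hC hpart hCπ (Finset.mem_of_mem_erase hB')
      (Finset.ne_of_mem_erase hB') x hx
    exact ⟨j, Finset.mem_preimage.2 hx⟩
  · intro j
    obtain ⟨B, ⟨hB, hjB⟩, huniq⟩ := hpart.2 (f j)
    have hBC : B ≠ C := by
      intro h
      exact ((hC (f j)).1 (h ▸ hjB)) j rfl
    refine ⟨B.preimage f hf.injective.injOn,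
      ⟨Finset.mem_image_of_mem _ (Finset.mem_erase.2 ⟨hBC, hB⟩), Finset.mem_preimage.2 hjB⟩, ?_⟩
    rintro D ⟨hD, hjD⟩
    obtain ⟨B', hB', rfl⟩ := Finset.mem_image.1 hD
    have : f j ∈ B' := Finset.mem_preimage.1 hjD
    rw [huniq B' ⟨Finset.mem_of_mem_erase hB', this⟩]
  · intro B hB
    obtain ⟨B', hB', rfl⟩ := Finset.mem_image.1 hB
    have : (B'.preimage f hf.injective.injOn).card = B'.card := by
      conv_rhs => rw [← key B' hB']
      rw [Finset.card_image_of_injective _ hf.injective]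
    rw [this]
    exact hcard B' (Finset.mem_of_mem_erase hB')

include hf in
omit hC in
lemma pairs_Phi (σ : Finset (Finset (Fin k))) :
    (Phi C f σ).filter (fun B => B.card = 2) =
      if C.card = 2 then insert C ((σ.filter fun B => B.card = 2).image (Finset.image f))
      else (σ.filter fun B => B.card = 2).image (Finset.image f) := by
  rw [Phi, Finset.filter_insert]
  have himg : (σ.image (Finset.image f)).filter (fun B => B.card = 2)
      = (σ.filter fun B => B.card = 2).image (Finset.image f) := by
    ext B
    simp only [Finset.mem_filter, Finset.mem_image]
    constructor
    · rintro ⟨⟨B', hB', rfl⟩, hcard⟩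
      refine ⟨B', ⟨hB', ?_⟩, rfl⟩
      rwa [Finset.card_image_of_injective _ hf.injective] at hcard
    · rintro ⟨B', ⟨hB', hcard⟩, rfl⟩
      exact ⟨⟨B', hB', rfl⟩, by rwa [Finset.card_image_of_injective _ hf.injective]⟩
  rw [himg]

include hf hC in
lemma singletons_Phi {σ : Finset (Finset (Fin k))} (hσ : IsPartition σ) (hC2 : 2 ≤ C.card) :
    (Finset.univ.filter fun i : Fin N => ({i} : Finset (Fin N)) ∈ Phi C f σ)
      = (Finset.univ.filter fun j : Fin k => ({j} : Finset (Fin k)) ∈ σ).image f := by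
  ext x
  simp only [Finset.mem_filter, Finset.mem_univ, true_and, Finset.mem_image, Phi,
    Finset.mem_insert]
  constructor
  · rintro (h | h)
    · have : ({x} : Finset (Fin N)).card = C.card := by rw [h]
      simp at this; omega
    · obtain ⟨B, hB, hBx⟩ := h
      have hcard : B.card = 1 := by
        have h2 := Finset.card_image_of_injective B hf.injective
        rw [hBx] at h2; simpa using h2.symm
      obtain ⟨j, rfl⟩ := Finset.card_eq_one.1 hcard
      rw [Finset.image_singleton] at hBx
      exact ⟨j, hB, Finset.singleton_inj.1 hBx⟩
  · rintro ⟨j, hj, rfl⟩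
    exact Or.inr ⟨{j}, hj, by simp⟩

include hf in
omit hC in
lemma aProd_image {a : Fin N → M} (B : Finset (Fin k)) :
    aProd a (B.image f) = aProd (a ∘ f) B := by
  rw [aProd, aProd, sort_map hf, List.map_map]

include hf hC in
lemma word_Phi {a : Fin N → M} {σ : Finset (Finset (Fin k))} (hσ : IsPartition σ)
    (hC2 : 2 ≤ C.card) :
    word a (Phi C f σ) = word (a ∘ f) σ := by
  rw [word, word, singL, singL, singletons_Phi hf hC hσ hC2, sort_map hf, List.map_map]
  rfl

include hf hC in
lemma coefE_Phi_pair (E : M →ₗ[ℂ] ℂ) (a : Fin N → M) (σ : Finset (Finset (Fin k)))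
    (hC2 : C.card = 2) :
    coefE E a (Phi C f σ) = -(E (aProd a C)) * coefE E (a ∘ f) σ := by
  have hCnot : C ∉ (σ.filter fun B => B.card = 2).image (Finset.image f) := by
    intro h
    obtain ⟨B, hB, rfl⟩ := Finset.mem_image.1 h
    have : B.Nonempty := Finset.card_pos.1 (by have := (Finset.mem_filter.1 hB).2; omega)
    exact C_ne_image hC this rfl
  rw [coefE, coefE, pairs_Phi hf σ, if_pos hC2, Finset.card_insert_of_notMem hCnot,
    Finset.prod_insert hCnot,
    Finset.card_image_of_injective _ (Finset.image_injective hf.injective),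
    Finset.prod_image (fun B _ B' _ h => Finset.image_injective hf.injective h)]
  have : ∀ B ∈ σ.filter fun B => B.card = 2, E (aProd a (B.image f)) = E (aProd (a ∘ f) B) :=
    fun B _ => by rw [aProd_image hf]
  rw [Finset.prod_congr rfl this]
  ring

include hf hC in
lemma coefE_Phi_single (E : M →ₗ[ℂ] ℂ) (a : Fin N → M) (σ : Finset (Finset (Fin k)))
    (hC1 : C.card = 1) :
    coefE E a (Phi C f σ) = coefE E (a ∘ f) σ := by
  rw [coefE, coefE, pairs_Phi hf σ, if_neg (by omega),
    Finset.card_image_of_injective _ (Finset.image_injective hf.injective),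
    Finset.prod_image (fun B _ B' _ h => Finset.image_injective hf.injective h)]
  have : ∀ B ∈ σ.filter fun B => B.card = 2, E (aProd a (B.image f)) = E (aProd (a ∘ f) B) :=
    fun B _ => by rw [aProd_image hf]
  rw [Finset.prod_congr rfl this]

include hf hC in
lemma singletons_Phi_max {c : Fin N} (hCc : C = {c}) (hmax : ∀ j, f j < c)
    (σ : Finset (Finset (Fin k))) :
    (Finset.univ.filter fun i : Fin N => ({i} : Finset (Fin N)) ∈ Phi C f σ)
      = insert c ((Finset.univ.filter fun j : Fin k => ({j} : Finset (Fin k)) ∈ σ).image f) := by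
  subst hCc
  ext x
  simp only [Finset.mem_filter, Finset.mem_univ, true_and, Finset.mem_insert, Finset.mem_image,
    Phi, Finset.mem_insert]
  constructor
  · rintro (h | h)
    · exact Or.inl (Finset.singleton_inj.1 h)
    · obtain ⟨B, hB, hBx⟩ := h
      have hcard : B.card = 1 := by
        have h2 := Finset.card_image_of_injective B hf.injective
        rw [hBx] at h2; simpa using h2.symm
      obtain ⟨j, rfl⟩ := Finset.card_eq_one.1 hcard
      rw [Finset.image_singleton] at hBx
      exact Or.inr ⟨j, hB, Finset.singleton_inj.1 hBx⟩
  · rintro (rfl | ⟨j, hj, rfl⟩)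
    · exact Or.inl rfl
    · exact Or.inr ⟨{j}, hj, by simp⟩

include hf hC in
lemma word_Phi_max (a : Fin N → M) {c : Fin N} (hCc : C = {c}) (hmax : ∀ j, f j < c)
    (σ : Finset (Finset (Fin k))) :
    word a (Phi C f σ) = word (a ∘ f) σ * TensorAlgebra.ι ℂ (a c) := by
  rw [word, word, singL, singL, singletons_Phi_max hf hC hCc hmax σ,
    sort_insert_max ?_, sort_map hf, List.map_append, List.prod_append, List.map_map]
  · rw [List.map_singleton, List.prod_singleton]
    rfl
  · intro b hb
    obtain ⟨j, _, rfl⟩ := Finset.mem_image.1 hb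
    exact hmax j

end Transfer

section Rec

variable {n : ℕ}

def mate (π : Finset (Finset (Fin (n+2)))) : Option (Fin (n+1)) :=
  if h : ∃ i : Fin (n+1), ({i.castSucc, Fin.last (n+1)} : Finset (Fin (n+2))) ∈ π
  then some h.choose else none

lemma mate_eq_some {π : Finset (Finset (Fin (n+2)))} (hπ : IsPartition π) {i : Fin (n+1)} :
    mate π = some i ↔ ({i.castSucc, Fin.last (n+1)} : Finset (Fin (n+2))) ∈ π := by
  constructor
  · intro h
    rw [mate] at h
    split_ifs at h with hex
    · cases h
      exact hex.choose_spec
  · intro h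
    have hex : ∃ i : Fin (n+1), ({i.castSucc, Fin.last (n+1)} : Finset (Fin (n+2))) ∈ π :=
      ⟨i, h⟩
    rw [mate, dif_pos hex]
    congr 1
    have hb := blocks_eq hπ hex.choose_spec h
      (Finset.mem_insert_of_mem (Finset.mem_singleton_self _))
      (Finset.mem_insert_of_mem (Finset.mem_singleton_self _))
    have : i.castSucc ∈ ({hex.choose.castSucc, Fin.last (n+1)} : Finset (Fin (n+2))) := by
      rw [hb]; exact Finset.mem_insert_self _ _
    rcases Finset.mem_insert.1 this with h' | h'
    · exact (Fin.castSucc_injective _ h').symm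
    · exact absurd (Finset.mem_singleton.1 h') (Fin.castSucc_lt_last i).ne
  
lemma mate_eq_none {π : Finset (Finset (Fin (n+2)))} (hπ : IsPartition π)
    (hcard : ∀ B ∈ π, B.card = 1 ∨ B.card = 2) :
    mate π = none ↔ ({Fin.last (n+1)} : Finset (Fin (n+2))) ∈ π := by
  constructor
  · intro h
    rw [mate] at h
    split_ifs at h with hex
    push_neg at hex
    obtain ⟨B, ⟨hB, hlB⟩, -⟩ := hπ.2 (Fin.last (n+1))
    rcases hcard B hB with h1 | h2
    · obtain ⟨x, rfl⟩ := Finset.card_eq_one.1 h1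
      rwa [← Finset.mem_singleton.1 hlB] at hB
    · obtain ⟨u, v, huv, rfl⟩ := Finset.card_eq_two.1 h2
      rcases Finset.mem_insert.1 hlB with rfl | hv
      · have hv' : v ≠ Fin.last (n+1) := fun h => huv h.symm
        obtain ⟨j, rfl⟩ := Fin.exists_castSucc_eq.2 hv'
        rw [Finset.pair_comm] at hB
        exact absurd hB (hex j)
      · rw [← Finset.mem_singleton.1 hv] at hB huv
        obtain ⟨j, rfl⟩ := Fin.exists_castSucc_eq.2 huv
        exact absurd hB (hex j)
  · intro h
    rw [mate, dif_neg]
    rintro ⟨i, hi⟩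
    have hb := blocks_eq hπ h hi (Finset.mem_singleton_self _)
      (Finset.mem_insert_of_mem (Finset.mem_singleton_self _))
    have : i.castSucc ∈ ({Fin.last (n+1)} : Finset (Fin (n+2))) := by
      rw [hb]; exact Finset.mem_insert_self _ _
    exact (Fin.castSucc_lt_last i).ne (Finset.mem_singleton.1 this)

lemma sum_P12_split (t : Finset (Finset (Fin (n+2))) → TensorAlgebra ℂ M) :
    ∑ π ∈ P12 (n+2), t π
      = ∑ π ∈ (P12 (n+2)).filter
            (fun π => ({Fin.last (n+1)} : Finset (Fin (n+2))) ∈ π), t π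
        + ∑ i : Fin (n+1), ∑ π ∈ (P12 (n+2)).filter
            (fun π => ({i.castSucc, Fin.last (n+1)} : Finset (Fin (n+2))) ∈ π), t π := by
  rw [← Finset.sum_fiberwise (P12 (n+2)) mate t, Fintype.sum_option]
  refine congrArg₂ (· + ·) (Finset.sum_congr ?_ fun _ _ => rfl)
    (Finset.sum_congr rfl fun i _ => Finset.sum_congr ?_ fun _ _ => rfl)
  · ext π
    simp only [Finset.mem_filter, and_congr_right_iff]
    intro hπ
    rw [P12, Finset.mem_filter] at hπ
    exact mate_eq_none hπ.2.1 hπ.2.2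
  · ext π
    simp only [Finset.mem_filter, and_congr_right_iff]
    intro hπ
    rw [P12, Finset.mem_filter] at hπ
    exact mate_eq_some hπ.2.1

lemma P12_part {m : ℕ} {σ : Finset (Finset (Fin m))} (h : σ ∈ P12 m) : IsPartition σ :=
  (Finset.mem_filter.1 h).2.1

lemma aProd_pair {m : ℕ} (a : Fin m → M) {x y : Fin m} (h : x < y) :
    aProd a {x, y} = a x * a y := by
  rw [aProd, sort_pair h]
  simp

lemma hCA : ∀ x : Fin (n+2), x ∈ ({Fin.last (n+1)} : Finset (Fin (n+2)))
    ↔ ∀ j : Fin (n+1), Fin.castSucc j ≠ x := by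
  intro x
  simp only [Finset.mem_singleton]
  constructor
  · rintro rfl j
    exact (Fin.castSucc_lt_last j).ne
  · intro h
    by_contra hx
    obtain ⟨j, rfl⟩ := Fin.exists_castSucc_eq.2 hx
    exact h j rfl

def fB (i : Fin (n+1)) : Fin n → Fin (n+2) := fun j => (i.succAbove j).castSucc

lemma fB_strictMono (i : Fin (n+1)) : StrictMono (fB i) :=
  fun _ _ h => Fin.castSucc_lt_castSucc_iff.2 ((Fin.strictMono_succAbove i) h)

lemma hCB (i : Fin (n+1)) : ∀ x : Fin (n+2),
    x ∈ ({i.castSucc, Fin.last (n+1)} : Finset (Fin (n+2))) ↔ ∀ j : Fin n, fB i j ≠ x := by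
  intro x
  simp only [Finset.mem_insert, Finset.mem_singleton]
  constructor
  · rintro (rfl | rfl) j hj
    · exact Fin.succAbove_ne i j (Fin.castSucc_injective _ hj)
    · exact (Fin.castSucc_lt_last _).ne hj
  · intro h
    by_contra hx
    push_neg at hx
    obtain ⟨hx1, hx2⟩ := hx
    obtain ⟨y, rfl⟩ := Fin.exists_castSucc_eq.2 hx2
    have hy : y ≠ i := fun q => hx1 (by rw [q])
    obtain ⟨j, rfl⟩ := Fin.exists_succAbove_eq hy
    exact h j rfl

lemma sumA (E : M →ₗ[ℂ] ℂ) (a : Fin (n+2) → M) :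
    ∑ π ∈ (P12 (n+2)).filter
        (fun π => ({Fin.last (n+1)} : Finset (Fin (n+2))) ∈ π),
      coefE E a π • word a π
    = R E (n+1) (Fin.init a) * TensorAlgebra.ι ℂ (a (Fin.last (n+1))) := by
  have hf : StrictMono (Fin.castSucc : Fin (n+1) → Fin (n+2)) := Fin.strictMono_castSucc
  have hC := hCA (n := n)
  rw [R, Finset.sum_mul]
  symm
  refine Finset.sum_bij'
    (fun σ _ => Phi {Fin.last (n+1)} Fin.castSucc σ)
    (fun π _ => Psi {Fin.last (n+1)} Fin.castSucc hf.injective π)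
    ?_ ?_ ?_ ?_ ?_
  · intro σ hσ
    rw [Finset.mem_filter]
    exact ⟨Phi_mem_P12 hf hC hσ (Or.inl (Finset.card_singleton _)),
      Finset.mem_insert_self _ _⟩
  · intro π hπ
    rw [Finset.mem_filter] at hπ
    exact Psi_mem_P12 hf hC hπ.1 hπ.2
  · intro σ hσ
    exact Psi_Phi hf hC (P12_part hσ) (Finset.singleton_nonempty _)
  · intro π hπ
    rw [Finset.mem_filter] at hπ
    exact Phi_Psi hC (P12_part hπ.1) hπ.2 hf.injective
  · intro σ hσ
    rw [coefE_Phi_single hf hC E a σ (Finset.card_singleton _),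
      word_Phi_max hf hC a rfl (fun j => Fin.castSucc_lt_last j) σ, smul_mul_assoc]
    rfl

lemma sumB (E : M →ₗ[ℂ] ℂ) (a : Fin (n+2) → M) (i : Fin (n+1)) :
    ∑ π ∈ (P12 (n+2)).filter
        (fun π => ({i.castSucc, Fin.last (n+1)} : Finset (Fin (n+2))) ∈ π),
      coefE E a π • word a π
    = -(E (a i.castSucc * a (Fin.last (n+1)))) • R E n (i.removeNth (Fin.init a)) := by
  have hf := fB_strictMono i
  have hC := hCB i
  have hpair : ({i.castSucc, Fin.last (n+1)} : Finset (Fin (n+2))).card = 2 :=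
    Finset.card_pair (Fin.castSucc_lt_last i).ne
  rw [R, Finset.smul_sum]
  symm
  refine Finset.sum_bij'
    (fun σ _ => Phi {i.castSucc, Fin.last (n+1)} (fB i) σ)
    (fun π _ => Psi {i.castSucc, Fin.last (n+1)} (fB i) hf.injective π)
    ?_ ?_ ?_ ?_ ?_
  · intro σ hσ
    rw [Finset.mem_filter]
    exact ⟨Phi_mem_P12 hf hC hσ (Or.inr hpair), Finset.mem_insert_self _ _⟩
  · intro π hπ
    rw [Finset.mem_filter] at hπ
    exact Psi_mem_P12 hf hC hπ.1 hπ.2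
  · intro σ hσ
    exact Psi_Phi hf hC (P12_part hσ) ⟨_, Finset.mem_insert_self _ _⟩
  · intro π hπ
    rw [Finset.mem_filter] at hπ
    exact Phi_Psi hC (P12_part hπ.1) hπ.2 hf.injective
  · intro σ hσ
    rw [coefE_Phi_pair hf hC E a σ hpair,
      word_Phi hf hC (P12_part hσ) (by omega),
      aProd_pair a (Fin.castSucc_lt_last i), smul_smul]
    rfl

lemma R_rec (E : M →ₗ[ℂ] ℂ) (a : Fin (n+2) → M) :
    R E (n+2) a
      = R E (n+1) (Fin.init a) * TensorAlgebra.ι ℂ (a (Fin.last (n+1)))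
        - ∑ i : Fin (n+1),
            E (a i.castSucc * a (Fin.last (n+1))) • R E n (i.removeNth (Fin.init a)) := by
  rw [R]
  rw [sum_P12_split (fun π => coefE E a π • word a π)]
  rw [sumA]
  rw [Finset.sum_congr rfl (fun i _ => sumB E a i)]
  have h : ∀ i ∈ (Finset.univ : Finset (Fin (n+1))),
      -(E (a i.castSucc * a (Fin.last (n+1)))) • R E n (i.removeNth (Fin.init a))
        = -((E (a i.castSucc * a (Fin.last (n+1)))) • R E n (i.removeNth (Fin.init a))) :=
    fun i _ => neg_smul _ _
  rw [Finset.sum_congr rfl h, Finset.sum_neg_distrib, ← sub_eq_add_neg]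

end Rec

lemma P12_zero : P12 0 = {∅} := by
  ext π
  simp only [P12, Finset.mem_filter, Finset.mem_univ, true_and, Finset.mem_singleton]
  constructor
  · rintro ⟨⟨hne, -⟩, -⟩
    rw [Finset.eq_empty_iff_forall_notMem]
    intro B hB
    obtain ⟨x, -⟩ := hne B hB
    exact x.elim0
  · rintro rfl
    exact ⟨⟨fun B hB => absurd hB (Finset.notMem_empty B), fun i => i.elim0⟩,
      fun B hB => absurd hB (Finset.notMem_empty B)⟩

lemma R_zero (E : M →ₗ[ℂ] ℂ) (a : Fin 0 → M) : R E 0 a = 1 := by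
  rw [R, P12_zero, Finset.sum_singleton, coefE, word, singL]
  simp

lemma P12_one : P12 1 = {{{(0 : Fin 1)}}} := by
  ext π
  simp only [P12, Finset.mem_filter, Finset.mem_univ, true_and, Finset.mem_singleton]
  constructor
  · rintro ⟨⟨hne, hcov⟩, -⟩
    obtain ⟨B, ⟨hB, h0B⟩, -⟩ := hcov 0
    have hB0 : B = {0} := by
      apply Finset.eq_singleton_iff_unique_mem.2
      exact ⟨h0B, fun x _ => Subsingleton.elim x 0⟩
    rw [Finset.eq_singleton_iff_unique_mem]
    refine ⟨hB0 ▸ hB, ?_⟩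
    intro B' hB'
    obtain ⟨x, hx⟩ := hne B' hB'
    have : (0 : Fin 1) ∈ B' := Subsingleton.elim x 0 ▸ hx
    apply Finset.eq_singleton_iff_unique_mem.2
    exact ⟨this, fun y _ => Subsingleton.elim y 0⟩
  · rintro rfl
    refine ⟨⟨?_, ?_⟩, ?_⟩
    · intro B hB
      rw [Finset.mem_singleton.1 hB]
      exact Finset.singleton_nonempty 0
    · intro i
      refine ⟨{0}, ⟨Finset.mem_singleton_self _, ?_⟩, ?_⟩
      · rw [Finset.mem_singleton]; exact Subsingleton.elim i 0
      · rintro B ⟨hB, -⟩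
        exact Finset.mem_singleton.1 hB
    · intro B hB
      rw [Finset.mem_singleton.1 hB]
      exact Or.inl (Finset.card_singleton _)

lemma R_one (E : M →ₗ[ℂ] ℂ) (a : Fin 1 → M) : R E 1 a = TensorAlgebra.ι ℂ (a 0) := by
  rw [R, P12_one, Finset.sum_singleton, coefE, word, singL]
  have h1 : ({{(0 : Fin 1)}} : Finset (Finset (Fin 1))).filter (fun B => B.card = 2) = ∅ := by
    rw [Finset.filter_singleton, if_neg (by simp)]
  have h2 : (Finset.univ.filter fun i : Fin 1 =>
      ({i} : Finset (Fin 1)) ∈ ({{(0 : Fin 1)}} : Finset (Finset (Fin 1))))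
      = ({0} : Finset (Fin 1)) := by
    ext i
    simp [Subsingleton.elim i 0]
  rw [h1, h2]
  simp

end Stmt8

theorem stmt8 {M : Type*} [Ring M] [Algebra ℂ M] (E : M →ₗ[ℂ] ℂ)
    (W : (m : ℕ) → (Fin m → M) → TensorAlgebra ℂ M)
    (hW0 : ∀ a : Fin 0 → M, W 0 a = 1)
    (hW1 : ∀ a : Fin 1 → M, W 1 a = W 0 (Fin.init a) * TensorAlgebra.ι ℂ (a 0))
    (hWrec : ∀ (m : ℕ) (a : Fin (m + 2) → M),
      W (m + 2) a =
        W (m + 1) (Fin.init a) * TensorAlgebra.ι ℂ (a (Fin.last (m + 1)))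
          - ∑ i : Fin (m + 1),
              E (a i.castSucc * a (Fin.last (m + 1))) • W m (i.removeNth (Fin.init a)))
    (n : ℕ) (a : Fin n → M) :
    W n a
      = ∑ π ∈ Finset.univ.filter (fun π : Finset (Finset (Fin n)) =>
            IsPartition π ∧ ∀ B ∈ π, B.card = 1 ∨ B.card = 2),
          ((-1 : ℂ) ^ (π.filter fun B => B.card = 2).card
              * ∏ B ∈ π.filter fun B => B.card = 2, E (aProd a B)) •
            ((singL π).map fun v => TensorAlgebra.ι ℂ (a v)).prod := by
  have key : ∀ m (b : Fin m → M), W m b = Stmt8.R E m b := by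
    intro m
    induction m using Nat.strong_induction_on with
    | _ m ih =>
      match m, ih with
      | 0, _ => intro b; rw [hW0, Stmt8.R_zero]
      | 1, _ => intro b; rw [hW1, hW0, one_mul, Stmt8.R_one]
      | (k+2), ih =>
        intro b
        rw [hWrec k b, ih (k+1) (by omega), Stmt8.R_rec]
        have hs : ∀ i ∈ (Finset.univ : Finset (Fin (k+1))),
            E (b i.castSucc * b (Fin.last (k+1))) • W k (i.removeNth (Fin.init b))
              = E (b i.castSucc * b (Fin.last (k+1)))
                  • Stmt8.R E k (i.removeNth (Fin.init b)) :=
          fun i _ => by rw [ih k (by omega)]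
        rw [Finset.sum_congr rfl hs]
  rw [key n a, Stmt8.R, Stmt8.P12]
  exact Finset.sum_congr rfl (fun π _ => rfl)
end
end

section
/- Let M be an associative ℂ-algebra, E : M → ℂ a linear functional, and let W_n : M^n → Γ(M) be the multilinear maps determined by W() = 1 and the recursion W(a₁,…,a_{n+1}) = W(a₁,…,a_n)·X(a_{n+1}) − E(a_{n+1})·W(a₁,…,a_n) − Σ_{i=1}^n W(a₁,…,â_i,…,a_n, a_i a_{n+1}) − Σ_{i=1}^n E(a_i a_{n+1})·W(a₁,…,â_i,…,a_n), where â_i means a_i is omitted and the product a_i a_{n+1} is appended as the last argument. Then for all a₁,…,a_n ∈ M: X(a₁)X(a₂)⋯X(a_n) = Σ_{(π,S) ∈ IP(n)} (Π_{U ∈ π∖S} E(a_U)) · W(a_{V₁},…,a_{V_m}), where V₁,…,V_m are the open blocks of (π,S) listed in increasing order of their largest elements. -/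
open Finset
open scoped Classical

noncomputable section

/-- The block of `P` containing `i`. -/
def blockOf {n : ℕ} (P : Finset (Finset (Fin n))) (i : Fin n) : Finset (Fin n) :=
  Finset.univ.filter fun x => ∃ B ∈ P, i ∈ B ∧ x ∈ B

/-- The largest elements of the blocks of `T`, in increasing order; this lists the
blocks of `T` in increasing order of their largest elements. -/
def maxElts {n : ℕ} (T : Finset (Finset (Fin n))) : List (Fin n) :=
  (Finset.univ.filter fun i : Fin n => ∃ B ∈ T, i ∈ B ∧ ∀ x ∈ B, x ≤ i).sort (· ≤ ·)

namespace Stmt10Aux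

variable {n : ℕ}

/-- pairwise-disjoint family of nonempty sets -/
def Fam (T : Finset (Finset (Fin n))) : Prop :=
  (∀ B ∈ T, B.Nonempty) ∧ ∀ B ∈ T, ∀ C ∈ T, ∀ i : Fin n, i ∈ B → i ∈ C → B = C

theorem IsPartition.fam {P : Finset (Finset (Fin n))} (h : IsPartition P) : Fam P := by
  refine ⟨h.1, fun B hB C hC i hiB hiC => ?_⟩
  obtain ⟨D, -, hD⟩ := h.2 i
  rw [hD B ⟨hB, hiB⟩, hD C ⟨hC, hiC⟩]

theorem Fam.subset {P S : Finset (Finset (Fin n))} (h : Fam P) (hS : S ⊆ P) : Fam S :=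
  ⟨fun B hB => h.1 B (hS hB), fun B hB C hC i hiB hiC => h.2 B (hS hB) C (hS hC) i hiB hiC⟩

theorem empty_not_mem {P : Finset (Finset (Fin n))} (h : ∀ B ∈ P, B.Nonempty) :
    ∅ ∉ P := fun hc => by simpa using h ∅ hc

theorem blockOf_eq {T : Finset (Finset (Fin n))} (hT : Fam T) {B : Finset (Fin n)}
    (hB : B ∈ T) {i : Fin n} (hi : i ∈ B) : blockOf T i = B := by
  ext x
  simp only [blockOf, Finset.mem_filter, Finset.mem_univ, true_and]
  constructor
  · rintro ⟨C, hC, hiC, hxC⟩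
    rwa [hT.2 C hC B hB i hiC hi] at hxC
  · exact fun hx => ⟨B, hB, hi, hx⟩

/-! ### up / down -/

def up (V : Finset (Fin n)) : Finset (Fin (n + 1)) := V.image Fin.castSucc

def down (B : Finset (Fin (n + 1))) : Finset (Fin n) :=
  Finset.univ.filter fun i => i.castSucc ∈ B

@[simp] theorem mem_down {B : Finset (Fin (n + 1))} {i : Fin n} :
    i ∈ down B ↔ i.castSucc ∈ B := by simp [down]

@[simp] theorem castSucc_mem_up {V : Finset (Fin n)} {j : Fin n} :
    j.castSucc ∈ up V ↔ j ∈ V := by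
  simp only [up, Finset.mem_image]
  exact ⟨fun ⟨x, hx, he⟩ => (Fin.castSucc_injective n he) ▸ hx, fun h => ⟨j, h, rfl⟩⟩

theorem last_not_mem_up (V : Finset (Fin n)) : Fin.last n ∉ up V := by
  simp only [up, Finset.mem_image]
  rintro ⟨x, -, hx⟩
  exact absurd hx (Fin.castSucc_lt_last x).ne

theorem mem_up {V : Finset (Fin n)} {x : Fin (n + 1)} :
    x ∈ up V ↔ ∃ j ∈ V, j.castSucc = x := by simp [up]

@[simp] theorem down_up (V : Finset (Fin n)) : down (up V) = V := by
  ext i; simp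

theorem up_down_erase (B : Finset (Fin (n + 1))) :
    up (down B) = B.erase (Fin.last n) := by
  ext x
  refine Fin.lastCases ?_ (fun j => ?_) x
  · simp [last_not_mem_up]
  · simp [Fin.exists_castSucc_eq, (Fin.castSucc_lt_last j).ne]

theorem up_down {B : Finset (Fin (n + 1))} (h : Fin.last n ∉ B) : up (down B) = B := by
  rw [up_down_erase, Finset.erase_eq_of_notMem h]

theorem up_injective : Function.Injective (up (n := n)) :=
  Finset.image_injective (Fin.castSucc_injective n)

theorem up_nonempty {V : Finset (Fin n)} (h : V.Nonempty) : (up V).Nonempty :=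
  h.image _

theorem down_nonempty {B : Finset (Fin (n + 1))} (hB : B.Nonempty)
    (h : B ≠ {Fin.last n}) : (down B).Nonempty := by
  obtain ⟨x, hx⟩ := hB
  by_cases hxl : x = Fin.last n
  · subst hxl
    obtain ⟨y, hy, hne⟩ : ∃ y ∈ B, y ≠ Fin.last n := by
      by_contra hc
      push_neg at hc
      exact h (Finset.eq_singleton_iff_unique_mem.2 ⟨hx, hc⟩)
    refine ⟨y.castPred hne, ?_⟩
    simpa [Fin.castSucc_castPred] using hy
  · exact ⟨x.castPred hxl, by simpa [Fin.castSucc_castPred] using hx⟩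

theorem down_nonempty' {B : Finset (Fin (n + 1))} (hB : B.Nonempty)
    (h : Fin.last n ∉ B) : (down B).Nonempty := by
  refine down_nonempty hB fun hc => h ?_
  rw [hc]; exact Finset.mem_singleton_self _

/-! ### sorting lemmas -/

theorem sort_insert_max {s : Finset (Fin n)} {a : Fin n} (h1 : ∀ b ∈ s, b ≤ a)
    (h2 : a ∉ s) : (insert a s).sort (· ≤ ·) = s.sort (· ≤ ·) ++ [a] := by
  refine (fun hp h1 h2 => List.Perm.eq_of_pairwise' h1 h2 hp) ?_ (Finset.pairwise_sort _ _) ?_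
  · refine ((Finset.sort_perm_toList _ _).trans ?_).trans
      (List.perm_append_singleton _ _).symm
    refine ((Finset.toList_insert h2).trans ?_)
    exact List.Perm.cons _ (Finset.sort_perm_toList _ _).symm
  · rw [List.pairwise_append]
    refine ⟨Finset.pairwise_sort _ _, List.pairwise_singleton _ _, ?_⟩
    intro b hb c hc
    rw [List.mem_singleton] at hc
    subst hc
    exact h1 b ((Finset.mem_sort _).1 hb)

theorem sort_up (V : Finset (Fin n)) :
    (up V).sort (· ≤ ·) = (V.sort (· ≤ ·)).map Fin.castSucc := by
  refine (fun hp h1 h2 => List.Perm.eq_of_pairwise' h1 h2 hp) ?_ (Finset.pairwise_sort _ _) ?_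
  · rw [← Multiset.coe_eq_coe]
    have h1 : ((up V).sort (· ≤ ·) : Multiset (Fin (n + 1))) = (up V).val :=
      Finset.sort_eq _ _
    have h2 : (up V).val = V.val.map Fin.castSucc := by
      rw [up, Finset.image_val, Multiset.dedup_eq_self.2]
      exact (Multiset.nodup_map_iff_of_injective (Fin.castSucc_injective n)).2 V.nodup
    rw [h1, h2, ← Multiset.map_coe, Finset.sort_eq]
  · exact List.Pairwise.map _ (fun a b h => Fin.castSucc_le_castSucc_iff.2 h)
      (Finset.pairwise_sort _ _)

theorem sort_erase' {s : Finset (Fin n)} (x : Fin n) :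
    (s.erase x).sort (· ≤ ·) = (s.sort (· ≤ ·)).erase x := by
  refine (fun hp h1 h2 => List.Perm.eq_of_pairwise' h1 h2 hp) ?_ (Finset.pairwise_sort _ _)
    (List.Pairwise.sublist List.erase_sublist (Finset.pairwise_sort s (· ≤ ·)))
  rw [← Multiset.coe_eq_coe, Finset.sort_eq, ← Multiset.coe_erase, Finset.sort_eq,
    Finset.erase_val]

theorem sort_erase {s : Finset (Fin n)} (i : Fin (s.sort (· ≤ ·)).length) :
    (s.erase ((s.sort (· ≤ ·)).get i)).sort (· ≤ ·) = (s.sort (· ≤ ·)).eraseIdx i := by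
  rw [sort_erase', List.Nodup.erase_get (Finset.sort_nodup _ _) i]

/-! ### aProd lemmas -/

variable {M : Type*} [Ring M]

theorem aProd_up (a : Fin (n + 1) → M) (V : Finset (Fin n)) :
    aProd a (up V) = aProd (Fin.init a) V := by
  unfold aProd
  rw [sort_up, List.map_map]
  rfl

theorem aProd_insert_last (a : Fin (n + 1) → M) (V : Finset (Fin n)) :
    aProd a (insert (Fin.last n) (up V)) = aProd (Fin.init a) V * a (Fin.last n) := by
  unfold aProd
  rw [sort_insert_max (fun b _ => Fin.le_last b) (last_not_mem_up V), List.map_append,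
    List.prod_append, sort_up, List.map_map]
  simp only [List.map_singleton, List.prod_singleton]
  rfl

theorem aProd_singleton (a : Fin n → M) (i : Fin n) : aProd a {i} = a i := by
  simp [aProd]

/-! ### maxSet lemmas -/

def maxSet (T : Finset (Finset (Fin n))) : Finset (Fin n) :=
  Finset.univ.filter fun i : Fin n => ∃ B ∈ T, i ∈ B ∧ ∀ x ∈ B, x ≤ i

theorem maxElts_eq (T : Finset (Finset (Fin n))) :
    maxElts T = (maxSet T).sort (· ≤ ·) := rfl

@[simp] theorem mem_maxSet {T : Finset (Finset (Fin n))} {i : Fin n} :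
    i ∈ maxSet T ↔ ∃ B ∈ T, i ∈ B ∧ ∀ x ∈ B, x ≤ i := by simp [maxSet]

@[simp] theorem maxSet_empty : maxSet (∅ : Finset (Finset (Fin n))) = ∅ := by
  ext i; simp

theorem blockOf_mem_of_maxSet {T : Finset (Finset (Fin n))} (hT : Fam T) {v : Fin n}
    (hv : v ∈ maxSet T) :
    blockOf T v ∈ T ∧ v ∈ blockOf T v ∧ ∀ x ∈ blockOf T v, x ≤ v := by
  obtain ⟨B, hB, hvB, hmax⟩ := mem_maxSet.1 hv
  rw [blockOf_eq hT hB hvB]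
  exact ⟨hB, hvB, hmax⟩

theorem maxSet_up (T : Finset (Finset (Fin n))) :
    maxSet (T.image up) = (maxSet T).image Fin.castSucc := by
  ext x
  constructor
  · intro hx
    obtain ⟨B, hB, hxB, hmax⟩ := mem_maxSet.1 hx
    obtain ⟨B', hB', rfl⟩ := Finset.mem_image.1 hB
    obtain ⟨j, hj, rfl⟩ := mem_up.1 hxB
    refine Finset.mem_image.2 ⟨j, mem_maxSet.2 ⟨B', hB', hj, fun y hy =>
      Fin.castSucc_le_castSucc_iff.1 (hmax _ (castSucc_mem_up.2 hy))⟩, rfl⟩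
  · intro hx
    obtain ⟨j, hj, rfl⟩ := Finset.mem_image.1 hx
    obtain ⟨B, hB, hjB, hmax⟩ := mem_maxSet.1 hj
    refine mem_maxSet.2 ⟨up B, Finset.mem_image_of_mem _ hB, castSucc_mem_up.2 hjB,
      fun y hy => ?_⟩
    obtain ⟨k, hk, rfl⟩ := mem_up.1 hy
    exact Fin.castSucc_le_castSucc_iff.2 (hmax _ hk)

theorem maxSet_insert_up (T : Finset (Finset (Fin n))) (N : Finset (Fin (n + 1)))
    (hN : Fin.last n ∈ N) :
    maxSet (insert N (T.image up)) = insert (Fin.last n) ((maxSet T).image Fin.castSucc) := by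
  ext x
  constructor
  · intro hx
    obtain ⟨B, hB, hxB, hmax⟩ := mem_maxSet.1 hx
    rcases Finset.mem_insert.1 hB with hB | hB
    · subst hB
      exact Finset.mem_insert.2 (Or.inl (le_antisymm (Fin.le_last x) (hmax _ hN)))
    · have : x ∈ maxSet (T.image up) := mem_maxSet.2 ⟨B, hB, hxB, hmax⟩
      rw [maxSet_up] at this
      exact Finset.mem_insert.2 (Or.inr this)
  · intro hx
    rcases Finset.mem_insert.1 hx with rfl | hx
    · exact mem_maxSet.2 ⟨N, Finset.mem_insert_self _ _, hN, fun y _ => Fin.le_last y⟩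
    · rw [← maxSet_up] at hx
      obtain ⟨B, hB, h1, h2⟩ := mem_maxSet.1 hx
      exact mem_maxSet.2 ⟨B, Finset.mem_insert_of_mem hB, h1, h2⟩

theorem maxElts_up (T : Finset (Finset (Fin n))) :
    maxElts (T.image up) = (maxElts T).map Fin.castSucc := by
  rw [maxElts_eq, maxElts_eq, maxSet_up]
  exact sort_up (maxSet T)

theorem castSucc_lt_last_ne (j : Fin n) : j.castSucc ≠ Fin.last n :=
  (Fin.castSucc_lt_last j).ne

theorem last_not_mem_image_castSucc (X : Finset (Fin n)) :
    Fin.last n ∉ X.image Fin.castSucc := last_not_mem_up X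

theorem maxElts_insert_up (T : Finset (Finset (Fin n))) (N : Finset (Fin (n + 1)))
    (hN : Fin.last n ∈ N) :
    maxElts (insert N (T.image up)) = (maxElts T).map Fin.castSucc ++ [Fin.last n] := by
  rw [maxElts_eq, maxSet_insert_up T N hN,
    sort_insert_max (fun b hb => Fin.le_last b) (last_not_mem_image_castSucc _)]
  rw [maxElts_eq, ← sort_up]
  rfl

theorem fam_up {T : Finset (Finset (Fin n))} (hT : Fam T) : Fam (T.image up) := by
  constructor
  · rintro B hB
    obtain ⟨C, hC, rfl⟩ := Finset.mem_image.1 hB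
    exact up_nonempty (hT.1 C hC)
  · rintro B hB C hC i hiB hiC
    obtain ⟨B', hB', rfl⟩ := Finset.mem_image.1 hB
    obtain ⟨C', hC', rfl⟩ := Finset.mem_image.1 hC
    obtain ⟨j, hj, rfl⟩ := mem_up.1 hiB
    rw [hT.2 B' hB' C' hC' j hj (castSucc_mem_up.1 hiC)]

theorem fam_insert_up {T : Finset (Finset (Fin n))} (hT : Fam T) {V₀ : Finset (Fin n)}
    (hd : ∀ C ∈ T, ∀ i ∈ V₀, i ∉ C) :
    Fam (insert (insert (Fin.last n) (up V₀)) (T.image up)) := by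
  have hup := fam_up hT
  constructor
  · rintro B hB
    rcases Finset.mem_insert.1 hB with rfl | hB
    · exact ⟨_, Finset.mem_insert_self _ _⟩
    · exact hup.1 B hB
  · rintro B hB C hC i hiB hiC
    have key : ∀ C' ∈ T.image up, ∀ i, i ∈ insert (Fin.last n) (up V₀) → i ∈ C' → False := by
      rintro C' hC' i hi hiC'
      obtain ⟨C'', hC'', rfl⟩ := Finset.mem_image.1 hC'
      rcases Finset.mem_insert.1 hi with rfl | hi
      · exact last_not_mem_up _ hiC'
      · obtain ⟨j, hj, rfl⟩ := mem_up.1 hi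
        exact hd C'' hC'' j hj (castSucc_mem_up.1 hiC')
    rcases Finset.mem_insert.1 hB with rfl | hB <;> rcases Finset.mem_insert.1 hC with rfl | hC
    · rfl
    · exact absurd hiC (fun h => key C hC i hiB h)
    · exact absurd hiB (fun h => key B hB i hiC h)
    · exact hup.2 B hB C hC i hiB hiC

theorem blockOf_up {T : Finset (Finset (Fin n))} (hT : Fam T) {v : Fin n}
    (hv : v ∈ maxSet T) :
    blockOf (T.image up) v.castSucc = up (blockOf T v) := by
  obtain ⟨h1, h2, -⟩ := blockOf_mem_of_maxSet hT hv
  exact blockOf_eq (fam_up hT) (Finset.mem_image_of_mem _ h1) (castSucc_mem_up.2 h2)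

/-! ### the extension maps -/

def newBlock (o : Option (Finset (Fin n))) : Finset (Fin (n + 1)) :=
  insert (Fin.last n) (up (o.getD ∅))

def extπ (π : Finset (Finset (Fin n))) (o : Option (Finset (Fin n))) :
    Finset (Finset (Fin (n + 1))) :=
  insert (newBlock o) ((π \ o.toFinset).image up)

def extS (S : Finset (Finset (Fin n))) (b : Bool) (o : Option (Finset (Fin n))) :
    Finset (Finset (Fin (n + 1))) :=
  if b then insert (newBlock o) ((S \ o.toFinset).image up) else (S \ o.toFinset).image up

theorem last_mem_newBlock (o : Option (Finset (Fin n))) : Fin.last n ∈ newBlock o :=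
  Finset.mem_insert_self _ _

@[simp] theorem down_newBlock (o : Option (Finset (Fin n))) :
    down (newBlock o) = o.getD ∅ := by
  ext i
  simp [newBlock, castSucc_lt_last_ne i]

@[simp] theorem newBlock_none : newBlock (none : Option (Finset (Fin n))) = {Fin.last n} := by
  simp [newBlock, up]

theorem newBlock_ne_last {V : Finset (Fin n)} (hV : V.Nonempty) :
    newBlock (some V) ≠ {Fin.last n} := by
  obtain ⟨j, hj⟩ := hV
  intro hc
  have : j.castSucc ∈ newBlock (some V) :=
    Finset.mem_insert_of_mem (castSucc_mem_up.2 hj)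
  rw [hc, Finset.mem_singleton] at this
  exact castSucc_lt_last_ne j this

theorem newBlock_not_mem_image_up (T : Finset (Finset (Fin n))) (o : Option (Finset (Fin n))) :
    newBlock o ∉ T.image up := by
  intro hc
  obtain ⟨C, -, hC⟩ := Finset.mem_image.1 hc
  exact last_not_mem_up C (hC ▸ last_mem_newBlock o)

theorem extS_subset_extπ {π S : Finset (Finset (Fin n))} (hS : S ⊆ π) (b : Bool)
    (o : Option (Finset (Fin n))) : extS S b o ⊆ extπ π o := by
  have h1 : (S \ o.toFinset).image up ⊆ (π \ o.toFinset).image up :=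
    Finset.image_subset_image (Finset.sdiff_subset_sdiff hS le_rfl)
  unfold extS extπ
  cases b
  · exact h1.trans (Finset.subset_insert _ _)
  · exact Finset.insert_subset_insert _ h1

theorem extπ_isPartition {π S : Finset (Finset (Fin n))} (hπ : IsPartition π) (hS : S ⊆ π)
    {o : Option (Finset (Fin n))} (ho : ∀ V ∈ o, V ∈ S) :
    IsPartition (extπ π o) := by
  constructor
  · rintro B hB
    rcases Finset.mem_insert.1 hB with rfl | hB
    · exact ⟨_, last_mem_newBlock o⟩
    · obtain ⟨C, hC, rfl⟩ := Finset.mem_image.1 hB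
      exact up_nonempty (hπ.1 C (Finset.mem_sdiff.1 hC).1)
  · intro i
    refine Fin.lastCases ?_ ?_ i
    · refine ⟨newBlock o, ⟨Finset.mem_insert_self _ _, last_mem_newBlock o⟩, ?_⟩
      rintro C ⟨hC, hLC⟩
      rcases Finset.mem_insert.1 hC with rfl | hC
      · rfl
      · obtain ⟨C', -, rfl⟩ := Finset.mem_image.1 hC
        exact absurd hLC (last_not_mem_up _)
    · intro j
      obtain ⟨B₀, ⟨hB₀, hjB₀⟩, huniq⟩ := hπ.2 j
      by_cases hj0 : ∃ V, o = some V ∧ B₀ = V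
      · obtain ⟨V, rfl, rfl⟩ := hj0
        refine ⟨newBlock (some B₀), ⟨Finset.mem_insert_self _ _,
          Finset.mem_insert_of_mem (castSucc_mem_up.2 hjB₀)⟩, ?_⟩
        rintro C ⟨hC, hjC⟩
        rcases Finset.mem_insert.1 hC with rfl | hC
        · rfl
        · exfalso
          obtain ⟨C', hC', rfl⟩ := Finset.mem_image.1 hC
          have he : C' = B₀ := huniq C' ⟨(Finset.mem_sdiff.1 hC').1, castSucc_mem_up.1 hjC⟩
          have := (Finset.mem_sdiff.1 hC').2
          rw [he] at this
          simp at this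
      · have hB₀' : B₀ ∈ π \ o.toFinset := by
          refine Finset.mem_sdiff.2 ⟨hB₀, ?_⟩
          intro hmem
          rcases o with _ | V
          · simp at hmem
          · simp only [Option.toFinset_some, Finset.mem_singleton] at hmem
            exact hj0 ⟨V, rfl, hmem⟩
        refine ⟨up B₀, ⟨Finset.mem_insert_of_mem (Finset.mem_image_of_mem _ hB₀'),
          castSucc_mem_up.2 hjB₀⟩, ?_⟩
        rintro C ⟨hC, hjC⟩
        rcases Finset.mem_insert.1 hC with rfl | hC
        · exfalso
          have hj' : j ∈ o.getD ∅ := by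
            rcases Finset.mem_insert.1 hjC with h | h
            · exact absurd h (castSucc_lt_last_ne j)
            · exact castSucc_mem_up.1 h
          rcases o with _ | V
          · simp at hj'
          · exact hj0 ⟨V, rfl, (huniq V ⟨hS (ho V rfl), hj'⟩).symm ▸ rfl⟩
        · obtain ⟨C', hC', rfl⟩ := Finset.mem_image.1 hC
          rw [huniq C' ⟨(Finset.mem_sdiff.1 hC').1, castSucc_mem_up.1 hjC⟩]

/-! ### recon -/

def recon (q : Finset (Finset (Fin (n + 1))) × Finset (Finset (Fin (n + 1)))) :
    (Finset (Finset (Fin n)) × Finset (Finset (Fin n))) × Bool × Option (Finset (Fin n)) :=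
  (((q.1.image down).erase ∅, ((insert (blockOf q.1 (Fin.last n)) q.2).image down).erase ∅),
    decide (blockOf q.1 (Fin.last n) ∈ q.2),
    if blockOf q.1 (Fin.last n) = {Fin.last n} then none
      else some (down (blockOf q.1 (Fin.last n))))

theorem blockOf_mem {P : Finset (Finset (Fin n))} (hP : IsPartition P) (i : Fin n) :
    blockOf P i ∈ P ∧ i ∈ blockOf P i := by
  obtain ⟨B₀, ⟨h1, h2⟩, -⟩ := hP.2 i
  rw [blockOf_eq (IsPartition.fam hP) h1 h2]
  exact ⟨h1, h2⟩

theorem image_down_up (T : Finset (Finset (Fin n))) : (T.image up).image down = T := by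
  rw [Finset.image_image]
  have : down ∘ up = (id : Finset (Fin n) → Finset (Fin n)) := funext down_up
  rw [this, Finset.image_id]

theorem image_up_down {Y : Finset (Finset (Fin (n + 1)))} (h : ∀ C ∈ Y, Fin.last n ∉ C) :
    (Y.image down).image up = Y := by
  rw [Finset.image_image]
  exact (Finset.image_congr fun C hC => up_down (h C hC)).trans Finset.image_id

section Recon

variable {π' S' : Finset (Finset (Fin (n + 1)))}

theorem blockOf_last_mem (hπ' : IsPartition π') : blockOf π' (Fin.last n) ∈ π' ∧ Fin.last n ∈ blockOf π' (Fin.last n) :=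
  blockOf_mem hπ' _

theorem not_last_mem_of_ne (hπ' : IsPartition π') {C : Finset (Fin (n + 1))} (hC : C ∈ π')
    (hne : C ≠ blockOf π' (Fin.last n)) : Fin.last n ∉ C := fun hL =>
  hne ((IsPartition.fam hπ').2 C hC _ (blockOf_last_mem hπ').1 _ hL (blockOf_last_mem hπ').2)

/-- main computation for restriction -/
theorem recon_core (hπ' : IsPartition π') {Y : Finset (Finset (Fin (n + 1)))} (hY : Y ⊆ π')
    (hBY : blockOf π' (Fin.last n) ∈ Y) :
    (((Y.image down).erase ∅) \
        (if blockOf π' (Fin.last n) = {Fin.last n} then (none : Option (Finset (Fin n)))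
          else some (down (blockOf π' (Fin.last n)))).toFinset).image up
      = Y.erase (blockOf π' (Fin.last n)) := by
  set B := blockOf π' (Fin.last n) with hB
  have hmemπ : B ∈ π' := (blockOf_last_mem hπ').1
  have hLB : Fin.last n ∈ B := (blockOf_last_mem hπ').2
  have hnoL : ∀ C ∈ Y.erase B, Fin.last n ∉ C := fun C hC =>
    not_last_mem_of_ne hπ' (hY (Finset.mem_erase.1 hC).2) (Finset.mem_erase.1 hC).1
  have hne : ∀ C ∈ Y.erase B, down C ≠ ∅ := by
    intro C hC
    have := down_nonempty' (hπ'.1 C (hY (Finset.mem_erase.1 hC).2)) (hnoL C hC)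
    exact Finset.nonempty_iff_ne_empty.1 this
  have hempty : ∅ ∉ (Y.erase B).image down := by
    intro hc
    obtain ⟨C, hC, hCe⟩ := Finset.mem_image.1 hc
    exact hne C hC hCe
  have himg : Y.image down = insert (down B) ((Y.erase B).image down) := by
    conv_lhs => rw [← Finset.insert_erase hBY]
    rw [Finset.image_insert]
  have hupdown : ((Y.erase B).image down).image up = Y.erase B := image_up_down hnoL
  by_cases hBL : B = {Fin.last n}
  · rw [if_pos hBL]
    have hdB : down B = ∅ := by
      rw [hBL]; ext i; simp [castSucc_lt_last_ne i]
    rw [himg, hdB, Option.toFinset_none, Finset.sdiff_empty,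
      Finset.erase_insert_eq_erase, Finset.erase_eq_of_notMem hempty, hupdown]
  · rw [if_neg hBL]
    have hdB : down B ≠ ∅ := Finset.nonempty_iff_ne_empty.1
      (down_nonempty (hπ'.1 B hmemπ) hBL)
    have hdBnot : down B ∉ (Y.erase B).image down := by
      intro hc
      obtain ⟨C, hC, hCe⟩ := Finset.mem_image.1 hc
      obtain ⟨j, hj⟩ := Finset.nonempty_iff_ne_empty.2 hdB
      have hjC : j.castSucc ∈ C := mem_down.1 (hCe ▸ hj)
      have hjB : j.castSucc ∈ B := mem_down.1 hj
      exact (Finset.mem_erase.1 hC).1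
        ((IsPartition.fam hπ').2 C (hY (Finset.mem_erase.1 hC).2) B hmemπ _ hjC hjB)
    have h1 : (Y.image down).erase ∅ = insert (down B) ((Y.erase B).image down) := by
      rw [himg, Finset.erase_eq_of_notMem]
      simp only [Finset.mem_insert]
      rintro (hc | hc)
      · exact hdB hc.symm
      · exact hempty hc
    rw [h1, Option.toFinset_some, Finset.sdiff_singleton_eq_erase,
      Finset.erase_insert hdBnot, hupdown]

theorem newBlock_recon (hπ' : IsPartition π') :
    newBlock (if blockOf π' (Fin.last n) = {Fin.last n} then (none : Option (Finset (Fin n)))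
      else some (down (blockOf π' (Fin.last n)))) = blockOf π' (Fin.last n) := by
  by_cases hBL : blockOf π' (Fin.last n) = {Fin.last n}
  · rw [if_pos hBL, newBlock_none, hBL]
  · rw [if_neg hBL]
    show insert (Fin.last n) (up (down _)) = _
    rw [up_down_erase, Finset.insert_erase (blockOf_last_mem hπ').2]

theorem ext_recon (hπ' : IsPartition π') (hS' : S' ⊆ π') :
    extπ ((π'.image down).erase ∅)
        (if blockOf π' (Fin.last n) = {Fin.last n} then none
          else some (down (blockOf π' (Fin.last n)))) = π' ∧
      extS (((insert (blockOf π' (Fin.last n)) S').image down).erase ∅)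
        (decide (blockOf π' (Fin.last n) ∈ S'))
        (if blockOf π' (Fin.last n) = {Fin.last n} then none
          else some (down (blockOf π' (Fin.last n)))) = S' := by
  have hmemπ : blockOf π' (Fin.last n) ∈ π' := (blockOf_last_mem hπ').1
  constructor
  · unfold extπ
    rw [newBlock_recon hπ', recon_core hπ' le_rfl hmemπ,
      Finset.insert_erase hmemπ]
  · have hcore := recon_core hπ' (Finset.insert_subset hmemπ hS') (Finset.mem_insert_self _ _)
    rw [Finset.erase_insert_eq_erase] at hcore
    unfold extS
    by_cases hBS : blockOf π' (Fin.last n) ∈ S'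
    · rw [decide_eq_true hBS, if_pos rfl, hcore, newBlock_recon hπ',
        Finset.insert_erase hBS]
    · rw [decide_eq_false hBS, if_neg (by simp), hcore, Finset.erase_eq_of_notMem hBS]

theorem recon_mem (hπ' : IsPartition π') (hS' : S' ⊆ π') :
    IsPartition ((π'.image down).erase ∅) ∧
      ((insert (blockOf π' (Fin.last n)) S').image down).erase ∅ ⊆ (π'.image down).erase ∅ ∧
      ∀ V ∈ (if blockOf π' (Fin.last n) = {Fin.last n} then (none : Option (Finset (Fin n)))
          else some (down (blockOf π' (Fin.last n)))),
        V ∈ ((insert (blockOf π' (Fin.last n)) S').image down).erase ∅ := by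
  set B := blockOf π' (Fin.last n) with hB
  have hmemπ : B ∈ π' := (blockOf_last_mem hπ').1
  refine ⟨⟨?_, ?_⟩, ?_, ?_⟩
  · intro C hC
    exact Finset.nonempty_iff_ne_empty.2 (Finset.mem_erase.1 hC).1
  · intro i
    have hmm := blockOf_mem hπ' i.castSucc
    refine ⟨down (blockOf π' i.castSucc), ⟨?_, mem_down.2 hmm.2⟩, ?_⟩
    · refine Finset.mem_erase.2 ⟨?_, Finset.mem_image_of_mem _ hmm.1⟩
      exact Finset.nonempty_iff_ne_empty.1 ⟨i, mem_down.2 hmm.2⟩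
    · rintro D ⟨hD, hiD⟩
      obtain ⟨C, hC, rfl⟩ := Finset.mem_image.1 (Finset.mem_erase.1 hD).2
      obtain ⟨B₀, -, huniq⟩ := hπ'.2 i.castSucc
      rw [huniq C ⟨hC, mem_down.1 hiD⟩, huniq (blockOf π' i.castSucc) ⟨hmm.1, hmm.2⟩]
  · exact Finset.erase_subset_erase _
      (Finset.image_subset_image (Finset.insert_subset_iff.2 ⟨hmemπ, hS'⟩))
  · intro V hV
    by_cases hBL : B = {Fin.last n}
    · rw [if_pos hBL] at hV
      simp at hV
    · rw [if_neg hBL, Option.mem_def, Option.some_inj] at hV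
      subst hV
      refine Finset.mem_erase.2 ⟨?_, Finset.mem_image_of_mem _ (Finset.mem_insert_self _ _)⟩
      exact Finset.nonempty_iff_ne_empty.1 (down_nonempty (hπ'.1 B hmemπ) hBL)

end Recon

theorem recon_ext {π S : Finset (Finset (Fin n))} (hπ : IsPartition π) (hS : S ⊆ π)
    (b : Bool) {o : Option (Finset (Fin n))} (ho : ∀ V ∈ o, V ∈ S) :
    recon (extπ π o, extS S b o) = ((π, S), b, o) := by
  have hpart := extπ_isPartition hπ hS ho
  have hBeq : blockOf (extπ π o) (Fin.last n) = newBlock o :=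
    blockOf_eq (IsPartition.fam hpart) (Finset.mem_insert_self _ _) (last_mem_newBlock o)
  have hins : insert (newBlock o) (extS S b o)
      = insert (newBlock o) ((S \ o.toFinset).image up) := by
    cases b
    · rfl
    · simp [extS, Finset.insert_idem]
  have key : ∀ T : Finset (Finset (Fin n)), (∀ V ∈ o, V ∈ T) → (∅ : Finset (Fin n)) ∉ T →
      ((insert (newBlock o) ((T \ o.toFinset).image up)).image down).erase ∅ = T := by
    intro T hoT hT
    rw [Finset.image_insert, down_newBlock, image_down_up]
    rcases o with _ | V
    · simp only [Option.toFinset_none, Finset.sdiff_empty, Option.getD_none]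
      rw [Finset.erase_insert_eq_erase, Finset.erase_eq_of_notMem hT]
    · simp only [Option.toFinset_some, Option.getD_some, Finset.sdiff_singleton_eq_erase]
      rw [Finset.insert_erase (hoT V rfl), Finset.erase_eq_of_notMem hT]
  have hemptyπ : (∅ : Finset (Fin n)) ∉ π := empty_not_mem hπ.1
  have hemptyS : (∅ : Finset (Fin n)) ∉ S := fun h => hemptyπ (hS h)
  have comp_π : ((extπ π o).image down).erase ∅ = π :=
    key π (fun V hV => hS (ho V hV)) hemptyπ
  have comp_S : ((insert (blockOf (extπ π o) (Fin.last n)) (extS S b o)).image down).erase ∅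
      = S := by
    rw [hBeq, hins]
    exact key S ho hemptyS
  have comp_b : decide (blockOf (extπ π o) (Fin.last n) ∈ extS S b o) = b := by
    rw [hBeq]
    cases b
    · exact decide_eq_false (newBlock_not_mem_image_up _ _)
    · exact decide_eq_true (Finset.mem_insert_self _ _)
  have comp_o : (if blockOf (extπ π o) (Fin.last n) = {Fin.last n} then none
      else some (down (blockOf (extπ π o) (Fin.last n)))) = o := by
    rw [hBeq]
    rcases o with _ | V
    · rw [if_pos newBlock_none]
    · rw [if_neg (newBlock_ne_last (hπ.1 V (hS (ho V rfl)))), down_newBlock]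
      rfl
  show ((((extπ π o, extS S b o).1.image down).erase ∅,
      ((insert (blockOf (extπ π o, extS S b o).1 (Fin.last n)) (extπ π o, extS S b o).2).image
          down).erase ∅),
    decide (blockOf (extπ π o, extS S b o).1 (Fin.last n) ∈ (extπ π o, extS S b o).2),
    if blockOf (extπ π o, extS S b o).1 (Fin.last n) = {Fin.last n} then none
      else some (down (blockOf (extπ π o, extS S b o).1 (Fin.last n)))) = ((π, S), b, o)
  rw [show (extπ π o, extS S b o).1 = extπ π o from rfl,
    show (extπ π o, extS S b o).2 = extS S b o from rfl, comp_π, comp_S, comp_b, comp_o]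

/-! ### sum reshaping -/

theorem sum_pairs {A : Type*} [AddCommMonoid A] {k : ℕ}
    (f : Finset (Finset (Fin k)) → Finset (Finset (Fin k)) → A) :
    ∑ π ∈ Finset.univ.filter (fun π : Finset (Finset (Fin k)) => IsPartition π),
        ∑ S ∈ π.powerset, f π S
      = ∑ q ∈ Finset.univ.filter
            (fun q : Finset (Finset (Fin k)) × Finset (Finset (Fin k)) =>
              IsPartition q.1 ∧ q.2 ⊆ q.1), f q.1 q.2 := by
  rw [Finset.sum_filter (fun q : Finset (Finset (Fin k)) × Finset (Finset (Fin k)) =>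
      IsPartition q.1 ∧ q.2 ⊆ q.1) (fun q => f q.1 q.2),
    Fintype.sum_prod_type, Finset.sum_filter]
  refine Finset.sum_congr rfl fun π _ => ?_
  by_cases hπ : IsPartition π
  · simp only [hπ, if_true, true_and]
    have hpow : π.powerset = Finset.univ.filter (· ⊆ π) := by ext; simp
    rw [hpow, Finset.sum_filter]
  · simp [hπ]

theorem sum_opts {A : Type*} [AddCommMonoid A] (S : Finset (Finset (Fin n)))
    (g : Bool → Option (Finset (Fin n)) → A) :
    ∑ bo ∈ (Finset.univ.filter fun bo : Bool × Option (Finset (Fin n)) =>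
        ∀ V ∈ bo.2, V ∈ S), g bo.1 bo.2
      = (g false none + g true none) + ∑ V ∈ S, (g false (some V) + g true (some V)) := by
  rw [Finset.sum_filter, Fintype.sum_prod_type, Fintype.sum_bool]
  have hopt : ∀ b : Bool, (∑ o : Option (Finset (Fin n)),
      if ∀ V ∈ o, V ∈ S then g b o else 0) = g b none + ∑ V ∈ S, g b (some V) := by
    intro b
    rw [Fintype.sum_option]
    congr 1
    · simp
    · have : ∀ V : Finset (Fin n), (if ∀ W ∈ some V, W ∈ S then g b (some V) else 0)
          = if V ∈ S then g b (some V) else 0 := by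
        intro V; congr 1; simp
      rw [Finset.sum_congr rfl fun V _ => this V]
      rw [Finset.sum_ite_mem, Finset.univ_inter]
  rw [hopt, hopt, Finset.sum_add_distrib]
  abel

theorem sum_ext {A : Type*} [AddCommMonoid A]
    (f : Finset (Finset (Fin (n + 1))) → Finset (Finset (Fin (n + 1))) → A) :
    ∑ q ∈ Finset.univ.filter
        (fun q : Finset (Finset (Fin (n + 1))) × Finset (Finset (Fin (n + 1))) =>
          IsPartition q.1 ∧ q.2 ⊆ q.1), f q.1 q.2
      = ∑ x ∈ Finset.univ.filter
          (fun x : (Finset (Finset (Fin n)) × Finset (Finset (Fin n)))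
              × Bool × Option (Finset (Fin n)) =>
            IsPartition x.1.1 ∧ x.1.2 ⊆ x.1.1 ∧ ∀ V ∈ x.2.2, V ∈ x.1.2),
          f (extπ x.1.1 x.2.2) (extS x.1.2 x.2.1 x.2.2) := by
  refine Finset.sum_nbij' (i := recon)
    (j := fun x => (extπ x.1.1 x.2.2, extS x.1.2 x.2.1 x.2.2)) ?_ ?_ ?_ ?_ ?_
  · intro q hq
    rw [Finset.mem_filter] at hq ⊢
    obtain ⟨h1, h2, h3⟩ := recon_mem hq.2.1 hq.2.2
    exact ⟨Finset.mem_univ _, h1, h2, h3⟩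
  · intro x hx
    rw [Finset.mem_filter] at hx ⊢
    exact ⟨Finset.mem_univ _, extπ_isPartition hx.2.1 hx.2.2.1 hx.2.2.2,
      extS_subset_extπ hx.2.2.1 _ _⟩
  · intro q hq
    rw [Finset.mem_filter] at hq
    obtain ⟨h1, h2⟩ := ext_recon hq.2.1 hq.2.2
    have : (extπ (recon q).1.1 (recon q).2.2, extS (recon q).1.2 (recon q).2.1 (recon q).2.2)
        = (q.1, q.2) := by
      rw [show recon q = recon (q.1, q.2) from rfl]
      exact Prod.ext h1 h2
    simpa using this
  · intro x hx
    rw [Finset.mem_filter] at hx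
    exact recon_ext hx.2.1 hx.2.2.1 x.2.1 hx.2.2.2
  · intro q hq
    rw [Finset.mem_filter] at hq
    obtain ⟨h1, h2⟩ := ext_recon hq.2.1 hq.2.2
    have : f (extπ (recon q).1.1 (recon q).2.2) (extS (recon q).1.2 (recon q).2.1 (recon q).2.2)
        = f q.1 q.2 := by
      rw [show recon q = recon (q.1, q.2) from rfl]
      rw [show extπ (recon (q.1, q.2)).1.1 (recon (q.1, q.2)).2.2 = q.1 from h1,
        show extS (recon (q.1, q.2)).1.2 (recon (q.1, q.2)).2.1 (recon (q.1, q.2)).2.2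
          = q.2 from h2]
    exact this.symm

theorem sum_IP_succ {A : Type*} [AddCommMonoid A]
    (f : Finset (Finset (Fin (n + 1))) → Finset (Finset (Fin (n + 1))) → A) :
    ∑ π ∈ Finset.univ.filter (fun π : Finset (Finset (Fin (n + 1))) => IsPartition π),
        ∑ S ∈ π.powerset, f π S
      = ∑ p ∈ Finset.univ.filter
            (fun p : Finset (Finset (Fin n)) × Finset (Finset (Fin n)) =>
              IsPartition p.1 ∧ p.2 ⊆ p.1),
          ((f (extπ p.1 none) (extS p.2 false none) + f (extπ p.1 none) (extS p.2 true none))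
            + ∑ V ∈ p.2, (f (extπ p.1 (some V)) (extS p.2 false (some V))
                + f (extπ p.1 (some V)) (extS p.2 true (some V)))) := by
  rw [sum_pairs, sum_ext]
  rw [Finset.sum_filter, Fintype.sum_prod_type, Finset.sum_filter]
  refine Finset.sum_congr rfl fun p _ => ?_
  by_cases hp : IsPartition p.1 ∧ p.2 ⊆ p.1
  · simp only [hp.1, hp.2, if_true, true_and]
    have := sum_opts p.2 (fun b o => f (extπ p.1 o) (extS p.2 b o))
    rw [Finset.sum_filter] at this
    rw [this]
  · rcases not_and_or.1 hp with h | h <;> simp [h]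

/-! ### analysis side helpers -/

theorem W_ext {M : Type*} {α : Sort*} (W : (m : ℕ) → (Fin m → M) → α) {p q : ℕ} (h : p = q)
    {u : Fin p → M} {v : Fin q → M} (huv : ∀ j : Fin q, u (Fin.cast h.symm j) = v j) :
    W p u = W q v := by
  subst h
  exact congrArg (W p) (funext huv)

theorem sum_fam {A : Type*} [AddCommMonoid A] {S : Finset (Finset (Fin n))} (hS : Fam S)
    (g : Finset (Fin n) → A) :
    ∑ V ∈ S, g V = ∑ i : Fin (maxElts S).length, g (blockOf S ((maxElts S).get i)) := by
  have h1 : ((maxElts S).map (fun v => g (blockOf S v))).sum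
      = ∑ i : Fin (maxElts S).length, g (blockOf S ((maxElts S).get i)) := by
    conv_lhs => rw [← List.ofFn_get (maxElts S)]
    rw [List.map_ofFn, List.sum_ofFn]
    rfl
  rw [← h1]
  have h2 : ((maxElts S).map (fun v => g (blockOf S v))).sum
      = ∑ v ∈ maxSet S, g (blockOf S v) := by
    rw [maxElts_eq, ← Finset.sum_map_toList]
    exact List.Perm.sum_eq (List.Perm.map _ (Finset.sort_perm_toList _ _))
  rw [h2]
  refine Finset.sum_bij (i := fun V hV => V.max' (hS.1 V hV)) ?_ ?_ ?_ ?_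
  · intro V hV
    exact mem_maxSet.2 ⟨V, hV, V.max'_mem _, fun x hx => Finset.le_max' _ _ hx⟩
  · intro V hV C hC h
    exact hS.2 V hV C hC _ (h ▸ V.max'_mem _) (C.max'_mem _)
  · intro v hv
    obtain ⟨B, hB, hvB, hmax⟩ := mem_maxSet.1 hv
    exact ⟨B, hB, le_antisymm (Finset.max'_le _ _ _ hmax) (Finset.le_max' _ _ hvB)⟩
  · intro V hV
    rw [blockOf_eq hS hV (V.max'_mem _)]

theorem fam_erase {S : Finset (Finset (Fin n))} (hS : Fam S) (V : Finset (Fin n)) :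
    Fam (S.erase V) := hS.subset (Finset.erase_subset _ _)

theorem maxSet_blockOf_erase {S : Finset (Finset (Fin n))} (hS : Fam S) {v : Fin n}
    (hv : v ∈ maxSet S) :
    maxSet (S.erase (blockOf S v)) = (maxSet S).erase v := by
  obtain ⟨hVS, hvV, hvmax⟩ := blockOf_mem_of_maxSet hS hv
  ext x
  constructor
  · intro hx
    obtain ⟨B, hB, hxB, hmax⟩ := mem_maxSet.1 hx
    have hBS : B ∈ S := (Finset.mem_erase.1 hB).2
    refine Finset.mem_erase.2 ⟨?_, mem_maxSet.2 ⟨B, hBS, hxB, hmax⟩⟩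
    rintro rfl
    exact (Finset.mem_erase.1 hB).1 (hS.2 B hBS _ hVS x hxB hvV)
  · intro hx
    obtain ⟨hne, hx'⟩ := Finset.mem_erase.1 hx
    obtain ⟨B, hB, hxB, hmax⟩ := mem_maxSet.1 hx'
    refine mem_maxSet.2 ⟨B, Finset.mem_erase.2 ⟨?_, hB⟩, hxB, hmax⟩
    rintro rfl
    exact hne (le_antisymm (hvmax x hxB) (hmax v hvV))

theorem blockOf_erase {S : Finset (Finset (Fin n))} (hS : Fam S) {v w : Fin n}
    (hv : v ∈ maxSet S) (hw : w ∈ maxSet S) (hne : w ≠ v) :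
    blockOf (S.erase (blockOf S v)) w = blockOf S w := by
  obtain ⟨hVS, hvV, hvmax⟩ := blockOf_mem_of_maxSet hS hv
  obtain ⟨hBS, hwB, hwmax⟩ := blockOf_mem_of_maxSet hS hw
  have hBne : blockOf S w ≠ blockOf S v := by
    intro h
    exact hne (le_antisymm (hvmax w (h ▸ hwB)) (hwmax v (h.symm ▸ hvV)))
  exact blockOf_eq (fam_erase hS _) (Finset.mem_erase.2 ⟨hBne, hBS⟩) hwB

theorem get_mem_maxSet {S : Finset (Finset (Fin n))} (i : Fin (maxElts S).length) :
    (maxElts S).get i ∈ maxSet S :=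
  (Finset.mem_sort _).1 ((maxElts S).get_mem _)

theorem maxElts_erase {S : Finset (Finset (Fin n))} (hS : Fam S)
    (i : Fin (maxElts S).length) :
    maxElts (S.erase (blockOf S ((maxElts S).get i))) = (maxElts S).eraseIdx i := by
  rw [maxElts_eq, maxSet_blockOf_erase hS (get_mem_maxSet i)]
  exact sort_erase i

theorem get_eraseIdx_succAbove {α : Type*} (l : List α) {k : ℕ} (hk : l.length = k + 1)
    (i : Fin l.length) (j : Fin k) (hj : (j : ℕ) < (l.eraseIdx (i : ℕ)).length) :
    (l.eraseIdx (i : ℕ)).get ⟨j, hj⟩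
      = l.get (Fin.cast hk.symm ((Fin.cast hk i).succAbove j)) := by
  rw [List.get_eq_getElem, List.get_eq_getElem, List.getElem_eraseIdx]
  by_cases h : (j : ℕ) < (i : ℕ)
  · rw [dif_pos h]
    have hsa : (Fin.cast hk i).succAbove j = j.castSucc :=
      Fin.succAbove_of_castSucc_lt _ _ (by simpa [Fin.lt_iff_val_lt_val] using h)
    rw [hsa]
    rfl
  · rw [dif_neg h]
    have hsa : (Fin.cast hk i).succAbove j = j.succ :=
      Fin.succAbove_of_le_castSucc _ _ (by simpa [Fin.le_iff_val_le_val] using not_lt.1 h)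
    rw [hsa]
    rfl

theorem prod_image_up {T : Finset (Finset (Fin n))} (g : Finset (Fin (n + 1)) → ℂ) :
    ∏ U ∈ T.image up, g U = ∏ U ∈ T, g (up U) :=
  Finset.prod_image fun x _ y _ h => up_injective h

theorem insert_sdiff_insert'' {α : Type*} [DecidableEq α] {N : α} {A B : Finset α}
    (hN : N ∉ A) : insert N A \ insert N B = A \ B := by
  ext x
  by_cases hx : x = N
  · subst hx
    simp [hN]
  · simp only [Finset.mem_sdiff, Finset.mem_insert, hx, false_or]

theorem sdiff_singleton_sdiff {V : Finset (Fin n)} {π S : Finset (Finset (Fin n))}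
    (hV : V ∈ S) : (π \ {V}) \ (S \ {V}) = π \ S := by
  ext x
  simp only [Finset.mem_sdiff, Finset.mem_singleton]
  constructor
  · rintro ⟨⟨h1, h2⟩, h3⟩
    exact ⟨h1, fun hx => h3 ⟨hx, h2⟩⟩
  · rintro ⟨h1, h2⟩
    exact ⟨⟨h1, fun hx => h2 (hx ▸ hV)⟩, fun hx => h2 hx.1⟩

theorem image_up_sdiff (A B : Finset (Finset (Fin n))) :
    (A \ B).image up = A.image up \ B.image up :=
  Finset.image_sdiff _ _ up_injective

section Vec

variable {M : Type*} [Ring M] {α : Sort*}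

def vecF {k : ℕ} (a : Fin k → M) (T : Finset (Finset (Fin k))) :
    Fin (maxElts T).length → M :=
  fun j => aProd a (blockOf T ((maxElts T).get j))

theorem vec_up {S : Finset (Finset (Fin n))} (hS : Fam S) (a : Fin (n + 1) → M)
    (W : (m : ℕ) → (Fin m → M) → α) :
    W (maxElts (S.image up)).length (vecF a (S.image up))
      = W (maxElts S).length (vecF (Fin.init a) S) := by
  have hlen : (maxElts (S.image up)).length = (maxElts S).length := by
    rw [maxElts_up, List.length_map]
  refine W_ext W hlen fun j => ?_
  show aProd a (blockOf (S.image up) ((maxElts (S.image up)).get (Fin.cast hlen.symm j))) = _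
  have hget : (maxElts (S.image up)).get (Fin.cast hlen.symm j)
      = Fin.castSucc ((maxElts S).get j) := by
    rw [List.get_eq_getElem, List.get_eq_getElem]
    simp only [maxElts_up, List.getElem_map]
    rfl
  rw [hget, blockOf_up hS (get_mem_maxSet j), aProd_up]
  rfl

theorem vec_insert {S : Finset (Finset (Fin n))} (hS : Fam S) (V₀ : Finset (Fin n))
    (hd : ∀ C ∈ S, ∀ i ∈ V₀, i ∉ C) (a : Fin (n + 1) → M)
    (W : (m : ℕ) → (Fin m → M) → α) :
    W (maxElts (insert (insert (Fin.last n) (up V₀)) (S.image up))).length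
        (vecF a (insert (insert (Fin.last n) (up V₀)) (S.image up)))
      = W ((maxElts S).length + 1)
          (Fin.snoc (vecF (Fin.init a) S) (aProd a (insert (Fin.last n) (up V₀)))) := by
  have hfam := fam_insert_up hS hd
  have hme := maxElts_insert_up S (insert (Fin.last n) (up V₀)) (Finset.mem_insert_self _ _)
  have hlen : (maxElts (insert (insert (Fin.last n) (up V₀)) (S.image up))).length
      = (maxElts S).length + 1 := by
    rw [hme, List.length_append, List.length_map]
    rfl
  refine W_ext W hlen fun j => ?_
  refine Fin.lastCases ?_ ?_ j
  · show aProd a (blockOf (insert (insert (Fin.last n) (up V₀)) (S.image up))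
        ((maxElts (insert (insert (Fin.last n) (up V₀)) (S.image up))).get
          (Fin.cast hlen.symm (Fin.last _)))) = _
    have hget : (maxElts (insert (insert (Fin.last n) (up V₀)) (S.image up))).get
        (Fin.cast hlen.symm (Fin.last _)) = Fin.last n := by
      rw [List.get_eq_getElem]
      simp only [hme]
      exact List.getElem_concat_length (by simp) _
    rw [hget, Fin.snoc_last,
      blockOf_eq hfam (Finset.mem_insert_self _ _) (Finset.mem_insert_self _ _)]
  · intro jj
    show aProd a (blockOf (insert (insert (Fin.last n) (up V₀)) (S.image up))
        ((maxElts (insert (insert (Fin.last n) (up V₀)) (S.image up))).get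
          (Fin.cast hlen.symm jj.castSucc))) = _
    rw [Fin.snoc_castSucc]
    have hget : (maxElts (insert (insert (Fin.last n) (up V₀)) (S.image up))).get
        (Fin.cast hlen.symm jj.castSucc) = Fin.castSucc ((maxElts S).get jj) := by
      rw [List.get_eq_getElem]
      simp only [hme]
      rw [List.getElem_append_left (by simpa using jj.isLt)]
      simp only [List.getElem_map]
      rfl
    have hb := blockOf_mem_of_maxSet hS (get_mem_maxSet jj)
    rw [hget, blockOf_eq hfam
      (Finset.mem_insert_of_mem (Finset.mem_image_of_mem up hb.1))
      (castSucc_mem_up.2 hb.2.1), aProd_up]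
    rfl

theorem vec_erase {S : Finset (Finset (Fin n))} (hS : Fam S) {k : ℕ}
    (hk : (maxElts S).length = k + 1) (i : Fin (maxElts S).length) (a : Fin n → M)
    (W : (m : ℕ) → (Fin m → M) → α) :
    W (maxElts (S.erase (blockOf S ((maxElts S).get i)))).length
        (vecF a (S.erase (blockOf S ((maxElts S).get i))))
      = W k ((Fin.cast hk i).removeNth
          (fun j : Fin (k + 1) => vecF a S (Fin.cast hk.symm j))) := by
  have hme := maxElts_erase hS i
  have hlen : (maxElts (S.erase (blockOf S ((maxElts S).get i)))).length = k := by
    rw [hme, List.length_eraseIdx, if_pos i.isLt, hk]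
    rfl
  refine W_ext W hlen fun j => ?_
  show aProd a (blockOf (S.erase (blockOf S ((maxElts S).get i)))
      ((maxElts (S.erase (blockOf S ((maxElts S).get i)))).get (Fin.cast hlen.symm j))) = _
  have hget : (maxElts (S.erase (blockOf S ((maxElts S).get i)))).get (Fin.cast hlen.symm j)
      = (maxElts S).get (Fin.cast hk.symm ((Fin.cast hk i).succAbove j)) := by
    have hj : (j : ℕ) < ((maxElts S).eraseIdx (i : ℕ)).length := by
      rw [← hme]
      exact (Fin.cast hlen.symm j).isLt
    rw [List.get_eq_getElem]
    refine (List.getElem_of_eq hme _).trans ?_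
    exact get_eraseIdx_succAbove (maxElts S) hk i j hj
  have hw : (maxElts S).get (Fin.cast hk.symm ((Fin.cast hk i).succAbove j)) ∈ maxSet S :=
    get_mem_maxSet _
  have hne : (maxElts S).get (Fin.cast hk.symm ((Fin.cast hk i).succAbove j))
      ≠ (maxElts S).get i := by
    intro hc
    have hval : (((Fin.cast hk i).succAbove j) : ℕ) = (i : ℕ) := by
      have := List.Nodup.get_inj_iff (Finset.sort_nodup _ _) |>.1 hc
      exact congrArg Fin.val this
    exact Fin.succAbove_ne (Fin.cast hk i) j (Fin.ext hval)
  rw [hget, blockOf_erase hS (get_mem_maxSet i) hw hne]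
  rfl

end Vec

end Stmt10Aux

open Stmt10Aux in
theorem stmt10 {M : Type*} [Ring M] [Algebra ℂ M] (E : M →ₗ[ℂ] ℂ)
    (W : (m : ℕ) → (Fin m → M) → TensorAlgebra ℂ M)
    (hW0 : ∀ a : Fin 0 → M, W 0 a = 1)
    (hW1 : ∀ a : Fin 1 → M,
      W 1 a = W 0 (Fin.init a) * TensorAlgebra.ι ℂ (a 0)
        - E (a 0) • W 0 (Fin.init a))
    (hWrec : ∀ (m : ℕ) (a : Fin (m + 2) → M),
      W (m + 2) a =
        W (m + 1) (Fin.init a) * TensorAlgebra.ι ℂ (a (Fin.last (m + 1)))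
          - E (a (Fin.last (m + 1))) • W (m + 1) (Fin.init a)
          - ∑ i : Fin (m + 1),
              W (m + 1) (Fin.snoc (i.removeNth (Fin.init a))
                (a i.castSucc * a (Fin.last (m + 1))))
          - ∑ i : Fin (m + 1),
              E (a i.castSucc * a (Fin.last (m + 1))) • W m (i.removeNth (Fin.init a)))
    (n : ℕ) (a : Fin n → M) :
    (List.ofFn fun i => TensorAlgebra.ι ℂ (a i)).prod
      = ∑ π ∈ Finset.univ.filter (fun π : Finset (Finset (Fin n)) => IsPartition π),
          ∑ S ∈ π.powerset,
            (∏ U ∈ π \ S, E (aProd a U)) •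
              W (maxElts S).length (fun j => aProd a (blockOf S ((maxElts S).get j))) := by
  induction n with
  | zero =>
      simp only [List.ofFn_zero, List.prod_nil]
      have hpart : (Finset.univ.filter fun π : Finset (Finset (Fin 0)) => IsPartition π)
          = {∅} := by
        ext π
        simp only [Finset.mem_filter, Finset.mem_univ, true_and, Finset.mem_singleton]
        constructor
        · intro hπ
          rw [Finset.eq_empty_iff_forall_notMem]
          intro B hB
          obtain ⟨x, hx⟩ := hπ.1 B hB
          exact Fin.elim0 x
        · rintro rfl
          exact ⟨fun B hB => absurd hB (Finset.notMem_empty _), fun i => Fin.elim0 i⟩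
      rw [hpart, Finset.sum_singleton, Finset.powerset_empty, Finset.sum_singleton]
      have hm : (maxElts (∅ : Finset (Finset (Fin 0)))).length = 0 := by
        rw [maxElts_eq, maxSet_empty, Finset.sort_empty]
        rfl
      rw [Finset.sdiff_empty, Finset.prod_empty, one_smul,
        Stmt10Aux.W_ext W hm (v := fun j : Fin 0 => (1 : M)) (fun j => j.elim0), hW0]
  | succ n ih =>
      have Wmul0 : ∀ (v : Fin 0 → M) (c' : M),
          W 0 v * TensorAlgebra.ι ℂ c' = W 1 (Fin.snoc v c') + E c' • W 0 v := by
        intro v c'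
        have h := hW1 (Fin.snoc v c')
        rw [Fin.init_snoc] at h
        have h0 : (Fin.snoc v c' : Fin 1 → M) 0 = c' := by
          rw [show (0 : Fin 1) = Fin.last 0 from rfl, Fin.snoc_last]
        rw [h0] at h
        rw [h, sub_add_cancel]
      have Wmul : ∀ (k : ℕ) (v : Fin (k + 1) → M) (c' : M),
          W (k + 1) v * TensorAlgebra.ι ℂ c'
            = W (k + 2) (Fin.snoc v c') + E c' • W (k + 1) v
              + ∑ i : Fin (k + 1), W (k + 1) (Fin.snoc (i.removeNth v) (v i * c'))
              + ∑ i : Fin (k + 1), E (v i * c') • W k (i.removeNth v) := by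
        intro k v c'
        have h := hWrec k (Fin.snoc v c')
        rw [Fin.init_snoc] at h
        simp only [Fin.snoc_last, Fin.snoc_castSucc] at h
        rw [h]
        abel
      rw [List.ofFn_succ', List.prod_concat,
        show (List.ofFn fun i : Fin n => TensorAlgebra.ι ℂ (a i.castSucc))
          = (List.ofFn fun i : Fin n => TensorAlgebra.ι ℂ (Fin.init a i)) from rfl,
        ih (Fin.init a)]
      rw [Stmt10Aux.sum_pairs (fun π S => (∏ U ∈ π \ S, E (aProd (Fin.init a) U)) •
            W (maxElts S).length (fun j => aProd (Fin.init a) (blockOf S ((maxElts S).get j))))]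
      rw [Stmt10Aux.sum_IP_succ (fun π' S' => (∏ U ∈ π' \ S', E (aProd a U)) •
            W (maxElts S').length (fun j => aProd a (blockOf S' ((maxElts S').get j))))]
      rw [Finset.sum_mul]
      refine Finset.sum_congr rfl fun p hp => ?_
      obtain ⟨π, S⟩ := p
      rw [Finset.mem_filter] at hp
      obtain ⟨-, hπ, hS⟩ := hp
      have famπ : Fam π := IsPartition.fam hπ
      have famS : Fam S := famπ.subset hS
      have hvec : ∀ (k : ℕ) (b : Fin k → M) (T : Finset (Finset (Fin k))),
          (fun j => aProd b (blockOf T ((maxElts T).get j))) = Stmt10Aux.vecF b T :=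
        fun _ _ _ => rfl
      simp only [hvec]
      have hLn : ∀ T : Finset (Finset (Fin n)),
          ({Fin.last n} : Finset (Fin (n + 1))) ∉ T.image Stmt10Aux.up := fun T h => by
        have h2 := Stmt10Aux.newBlock_not_mem_image_up T none
        rw [Stmt10Aux.newBlock_none] at h2
        exact h2 h
      have hNn : ∀ (T : Finset (Finset (Fin n))) (V : Finset (Fin n)),
          insert (Fin.last n) (Stmt10Aux.up V) ∉ T.image Stmt10Aux.up := fun T V h =>
        Stmt10Aux.newBlock_not_mem_image_up T (some V) h
      have eπn : Stmt10Aux.extπ π none = insert {Fin.last n} (π.image Stmt10Aux.up) := by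
        unfold Stmt10Aux.extπ
        rw [Stmt10Aux.newBlock_none, Option.toFinset_none, Finset.sdiff_empty]
      have eSfn : Stmt10Aux.extS S false none = S.image Stmt10Aux.up := by
        unfold Stmt10Aux.extS
        rw [if_neg (by simp), Option.toFinset_none, Finset.sdiff_empty]
      have eStn : Stmt10Aux.extS S true none = insert {Fin.last n} (S.image Stmt10Aux.up) := by
        unfold Stmt10Aux.extS
        rw [if_pos rfl, Stmt10Aux.newBlock_none, Option.toFinset_none, Finset.sdiff_empty]
      have eπs : ∀ V : Finset (Fin n), Stmt10Aux.extπ π (some V)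
          = insert (insert (Fin.last n) (Stmt10Aux.up V))
              ((π.erase V).image Stmt10Aux.up) := by
        intro V
        unfold Stmt10Aux.extπ
        rw [show Stmt10Aux.newBlock (some V) = insert (Fin.last n) (Stmt10Aux.up V) from rfl,
          Option.toFinset_some, Finset.sdiff_singleton_eq_erase]
      have eSfs : ∀ V : Finset (Fin n), Stmt10Aux.extS S false (some V)
          = (S.erase V).image Stmt10Aux.up := by
        intro V
        unfold Stmt10Aux.extS
        rw [if_neg (by simp), Option.toFinset_some, Finset.sdiff_singleton_eq_erase]
      have eSts : ∀ V : Finset (Fin n), Stmt10Aux.extS S true (some V)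
          = insert (insert (Fin.last n) (Stmt10Aux.up V))
              ((S.erase V).image Stmt10Aux.up) := by
        intro V
        unfold Stmt10Aux.extS
        rw [if_pos rfl,
          show Stmt10Aux.newBlock (some V) = insert (Fin.last n) (Stmt10Aux.up V) from rfl,
          Option.toFinset_some, Finset.sdiff_singleton_eq_erase]
      simp only [eπn, eSfn, eStn, eπs, eSfs, eSts]
      have coefA : (∏ x ∈ insert {Fin.last n} (π.image Stmt10Aux.up) \ S.image Stmt10Aux.up,
          E (aProd a x)) = E (a (Fin.last n)) * ∏ U ∈ π \ S, E (aProd (Fin.init a) U) := by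
        rw [Finset.insert_sdiff_of_notMem _ (hLn S), ← Stmt10Aux.image_up_sdiff,
          Finset.prod_insert (hLn (π \ S)), Stmt10Aux.aProd_singleton,
          Stmt10Aux.prod_image_up]
        simp only [Stmt10Aux.aProd_up]
      have coefB : (∏ x ∈ insert {Fin.last n} (π.image Stmt10Aux.up)
            \ insert {Fin.last n} (S.image Stmt10Aux.up), E (aProd a x))
          = ∏ U ∈ π \ S, E (aProd (Fin.init a) U) := by
        rw [Stmt10Aux.insert_sdiff_insert'' (hLn π), ← Stmt10Aux.image_up_sdiff,
          Stmt10Aux.prod_image_up]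
        simp only [Stmt10Aux.aProd_up]
      have WA : W (maxElts (Stmt10Aux.extS S false none)).length
            (Stmt10Aux.vecF a (Stmt10Aux.extS S false none))
          = W (maxElts S).length (Stmt10Aux.vecF (Fin.init a) S) := by
        rw [eSfn]
        exact Stmt10Aux.vec_up famS a W
      have WB : W (maxElts (Stmt10Aux.extS S true none)).length
            (Stmt10Aux.vecF a (Stmt10Aux.extS S true none))
          = W ((maxElts S).length + 1)
              (Fin.snoc (Stmt10Aux.vecF (Fin.init a) S) (a (Fin.last n))) := by
        have h1 : Stmt10Aux.extS S true none
            = insert (insert (Fin.last n) (Stmt10Aux.up ∅)) (S.image Stmt10Aux.up) := by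
          rw [eStn, show Stmt10Aux.up (∅ : Finset (Fin n)) = ∅ from Finset.image_empty _,
            show insert (Fin.last n) (∅ : Finset (Fin (n + 1))) = {Fin.last n} by simp]
        rw [h1, Stmt10Aux.vec_insert famS ∅ (by simp) a W]
        congr 1
        rw [show Stmt10Aux.up (∅ : Finset (Fin n)) = ∅ from Finset.image_empty _]
        rw [show insert (Fin.last n) (∅ : Finset (Fin (n + 1))) = {Fin.last n} by simp]
        rw [Stmt10Aux.aProd_singleton]
      have hsummand : ∀ V ∈ S,
          ((∏ x ∈ insert (insert (Fin.last n) (Stmt10Aux.up V))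
                ((π.erase V).image Stmt10Aux.up) \ (S.erase V).image Stmt10Aux.up,
              E (aProd a x)) •
            W (maxElts (Stmt10Aux.extS S false (some V))).length
              (Stmt10Aux.vecF a (Stmt10Aux.extS S false (some V))) +
          (∏ x ∈ insert (insert (Fin.last n) (Stmt10Aux.up V))
                ((π.erase V).image Stmt10Aux.up)
              \ insert (insert (Fin.last n) (Stmt10Aux.up V))
                ((S.erase V).image Stmt10Aux.up),
              E (aProd a x)) •
            W (maxElts (Stmt10Aux.extS S true (some V))).length
              (Stmt10Aux.vecF a (Stmt10Aux.extS S true (some V))))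
          = (E (aProd (Fin.init a) V * a (Fin.last n))
                * ∏ U ∈ π \ S, E (aProd (Fin.init a) U)) •
              W (maxElts (S.erase V)).length (Stmt10Aux.vecF (Fin.init a) (S.erase V))
            + (∏ U ∈ π \ S, E (aProd (Fin.init a) U)) •
              W ((maxElts (S.erase V)).length + 1)
                (Fin.snoc (Stmt10Aux.vecF (Fin.init a) (S.erase V))
                  (aProd (Fin.init a) V * a (Fin.last n))) := by
        intro V hV
        have herase : π.erase V \ S.erase V = π \ S := by
          rw [← Finset.sdiff_singleton_eq_erase, ← Finset.sdiff_singleton_eq_erase]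
          exact Stmt10Aux.sdiff_singleton_sdiff hV
        have hdV : ∀ C ∈ S.erase V, ∀ x ∈ V, x ∉ C := by
          intro C hC x hxV hxC
          exact (Finset.mem_erase.1 hC).1
            (famS.2 C (Finset.mem_erase.1 hC).2 V hV x hxC hxV)
        have cC : (∏ x ∈ insert (insert (Fin.last n) (Stmt10Aux.up V))
              ((π.erase V).image Stmt10Aux.up) \ (S.erase V).image Stmt10Aux.up,
            E (aProd a x))
            = E (aProd (Fin.init a) V * a (Fin.last n))
                * ∏ U ∈ π \ S, E (aProd (Fin.init a) U) := by
          rw [Finset.insert_sdiff_of_notMem _ (hNn (S.erase V) V),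
            ← Stmt10Aux.image_up_sdiff, herase,
            Finset.prod_insert (hNn (π \ S) V), Stmt10Aux.aProd_insert_last,
            Stmt10Aux.prod_image_up]
          simp only [Stmt10Aux.aProd_up]
        have cD : (∏ x ∈ insert (insert (Fin.last n) (Stmt10Aux.up V))
              ((π.erase V).image Stmt10Aux.up)
            \ insert (insert (Fin.last n) (Stmt10Aux.up V))
              ((S.erase V).image Stmt10Aux.up), E (aProd a x))
            = ∏ U ∈ π \ S, E (aProd (Fin.init a) U) := by
          rw [Stmt10Aux.insert_sdiff_insert'' (hNn (π.erase V) V),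
            ← Stmt10Aux.image_up_sdiff, herase, Stmt10Aux.prod_image_up]
          simp only [Stmt10Aux.aProd_up]
        have WC : W (maxElts (Stmt10Aux.extS S false (some V))).length
              (Stmt10Aux.vecF a (Stmt10Aux.extS S false (some V)))
            = W (maxElts (S.erase V)).length (Stmt10Aux.vecF (Fin.init a) (S.erase V)) := by
          rw [eSfs V]
          exact Stmt10Aux.vec_up (Stmt10Aux.fam_erase famS V) a W
        have WD : W (maxElts (Stmt10Aux.extS S true (some V))).length
              (Stmt10Aux.vecF a (Stmt10Aux.extS S true (some V)))
            = W ((maxElts (S.erase V)).length + 1)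
                (Fin.snoc (Stmt10Aux.vecF (Fin.init a) (S.erase V))
                  (aProd (Fin.init a) V * a (Fin.last n))) := by
          rw [eSts V, Stmt10Aux.vec_insert (Stmt10Aux.fam_erase famS V) V hdV a W]
          congr 1
          rw [Stmt10Aux.aProd_insert_last]
        rw [cC, cD, WC, WD]
      rw [coefA, coefB, WA, WB, Finset.sum_congr rfl hsummand]
      rw [Stmt10Aux.sum_fam famS (fun V =>
        (E (aProd (Fin.init a) V * a (Fin.last n)) * ∏ U ∈ π \ S, E (aProd (Fin.init a) U)) •
            W (maxElts (S.erase V)).length (Stmt10Aux.vecF (Fin.init a) (S.erase V))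
          + (∏ U ∈ π \ S, E (aProd (Fin.init a) U)) •
            W ((maxElts (S.erase V)).length + 1)
              (Fin.snoc (Stmt10Aux.vecF (Fin.init a) (S.erase V))
                (aProd (Fin.init a) V * a (Fin.last n))))]
      rcases Nat.eq_zero_or_pos (maxElts S).length with h0 | hpos
      · haveI : IsEmpty (Fin (maxElts S).length) := by rw [h0]; infer_instance
        rw [Finset.univ_eq_empty, Finset.sum_empty, add_zero]
        have hu : W (maxElts S).length (Stmt10Aux.vecF (Fin.init a) S)
            = W 0 Fin.elim0 := Stmt10Aux.W_ext W h0 (fun j => j.elim0)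
        have hsnoc : W ((maxElts S).length + 1)
              (Fin.snoc (Stmt10Aux.vecF (Fin.init a) S) (a (Fin.last n)))
            = W 1 (Fin.snoc Fin.elim0 (a (Fin.last n))) := by
          refine Stmt10Aux.W_ext W (by rw [h0]) fun j => ?_
          have hj1 : Fin.cast (by rw [h0] : (maxElts S).length + 1 = 1).symm j
              = Fin.last (maxElts S).length := Fin.ext (by omega)
          rw [hj1, Fin.snoc_last]
          have hj2 : j = Fin.last 0 := Fin.ext (by omega)
          rw [hj2, Fin.snoc_last]
        rw [hu, hsnoc, smul_mul_assoc, Wmul0,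
          mul_comm (E (a (Fin.last n))) (∏ U ∈ π \ S, E (aProd (Fin.init a) U)),
          mul_smul, smul_add]
        abel
      · obtain ⟨k, hk⟩ : ∃ k, (maxElts S).length = k + 1 :=
          ⟨(maxElts S).length - 1, (Nat.succ_pred_eq_of_pos hpos).symm⟩
        set u : Fin (k + 1) → M :=
          fun j => Stmt10Aux.vecF (Fin.init a) S (Fin.cast hk.symm j) with hudef
        have hWm : W (maxElts S).length (Stmt10Aux.vecF (Fin.init a) S) = W (k + 1) u :=
          Stmt10Aux.W_ext W hk (fun j => rfl)
        have hWsnoc : W ((maxElts S).length + 1)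
              (Fin.snoc (Stmt10Aux.vecF (Fin.init a) S) (a (Fin.last n)))
            = W (k + 2) (Fin.snoc u (a (Fin.last n))) := by
          refine Stmt10Aux.W_ext W (by rw [hk]) fun j => ?_
          refine Fin.lastCases ?_ (fun jj => ?_) j
          · have h1 : Fin.cast (by rw [hk] : (maxElts S).length + 1 = k + 2).symm
                (Fin.last (k + 1)) = Fin.last (maxElts S).length := Fin.ext (by simp [hk])
            rw [h1, Fin.snoc_last, Fin.snoc_last]
          · have h1 : Fin.cast (by rw [hk] : (maxElts S).length + 1 = k + 2).symm
                jj.castSucc = (Fin.cast hk.symm jj).castSucc := Fin.ext rfl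
            rw [h1, Fin.snoc_castSucc, Fin.snoc_castSucc]
        rw [← Fin.sum_congr' _ hk.symm]
        have hterm : ∀ i' : Fin (k + 1),
            ((E (aProd (Fin.init a)
                  (blockOf S ((maxElts S).get (Fin.cast hk.symm i'))) * a (Fin.last n))
                * ∏ U ∈ π \ S, E (aProd (Fin.init a) U)) •
              W (maxElts (S.erase
                    (blockOf S ((maxElts S).get (Fin.cast hk.symm i'))))).length
                (Stmt10Aux.vecF (Fin.init a)
                  (S.erase (blockOf S ((maxElts S).get (Fin.cast hk.symm i')))))
            + (∏ U ∈ π \ S, E (aProd (Fin.init a) U)) •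
              W ((maxElts (S.erase
                    (blockOf S ((maxElts S).get (Fin.cast hk.symm i'))))).length + 1)
                (Fin.snoc (Stmt10Aux.vecF (Fin.init a)
                    (S.erase (blockOf S ((maxElts S).get (Fin.cast hk.symm i')))))
                  (aProd (Fin.init a)
                      (blockOf S ((maxElts S).get (Fin.cast hk.symm i')))
                    * a (Fin.last n))))
            = (∏ U ∈ π \ S, E (aProd (Fin.init a) U)) •
                (E (u i' * a (Fin.last n)) • W k (i'.removeNth u)
                  + W (k + 1) (Fin.snoc (i'.removeNth u) (u i' * a (Fin.last n)))) := by
          intro i'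
          have hcc : Fin.cast hk (Fin.cast hk.symm i') = i' := Fin.ext rfl
          have h1 := Stmt10Aux.vec_erase famS hk (Fin.cast hk.symm i') (Fin.init a) W
          rw [hcc] at h1
          have h2 := Stmt10Aux.vec_erase famS hk (Fin.cast hk.symm i') (Fin.init a)
            (fun m v => W (m + 1) (Fin.snoc v
              (aProd (Fin.init a) (blockOf S ((maxElts S).get (Fin.cast hk.symm i')))
                * a (Fin.last n))))
          rw [hcc] at h2
          rw [h1, h2, mul_comm
            (E (aProd (Fin.init a)
                (blockOf S ((maxElts S).get (Fin.cast hk.symm i'))) * a (Fin.last n)))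
            (∏ U ∈ π \ S, E (aProd (Fin.init a) U)), mul_smul, ← smul_add]
          rfl
        rw [Finset.sum_congr rfl (fun i' _ => hterm i'), hWm, hWsnoc,
          smul_mul_assoc, Wmul k u (a (Fin.last n)),
          mul_comm (E (a (Fin.last n))) (∏ U ∈ π \ S, E (aProd (Fin.init a) U)),
          mul_smul, ← Finset.smul_sum, ← smul_add, ← smul_add]
        congr 1
        rw [Finset.sum_add_distrib]
        abel
end
end

section
/- Let M be an associative ℂ-algebra, E : M → ℂ a linear functional, and let W_n : M^n → Γ(M) be the multilinear maps determined by W() = 1 and the recursion W(a₁,…,a_{n+1}) = W(a₁,…,a_n)·X(a_{n+1}) − E(a_{n+1})·W(a₁,…,a_n) − W(a₁,…,a_{n−1}, a_n a_{n+1}) − E(a_n a_{n+1})·W(a₁,…,a_{n−1}), where the last two terms are omitted when n = 0. Then for all a₁,…,a_n ∈ M: W(a₁,…,a_n) = Σ_{(π,S)} (−1)^{n−|S|} (Π_{{i} ∈ π∖S} E(a_i)) · X(a_{V₁})X(a_{V₂})⋯X(a_{V_m}), where the sum is over all (π,S) ∈ IP(n) such that π is an interval partition and every closed block of π is a singleton,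 |S| is the number of open blocks, and V₁,…,V_m are the open blocks of π listed in left-to-right order. -/
open Finset
open scoped Classical

noncomputable section

/-- An interval partition: each block is a set of consecutive integers. -/
def IsIntervalPartition {n : ℕ} (P : Finset (Finset (Fin n))) : Prop :=
  ∀ B ∈ P, ∀ i ∈ B, ∀ j ∈ B, ∀ k : Fin n, i ≤ k → k ≤ j → k ∈ B

namespace Stmt14Aux

/-- sort commutes with mapping by `castSucc`. -/
lemma sort_map_castSucc {n : ℕ} (B : Finset (Fin n)) :
    ((B.map Fin.castSuccEmb).sort (· ≤ ·))
      = (B.sort (· ≤ ·)).map Fin.castSucc := by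
  haveI : IsAntisymm (Fin (n+1)) (fun x1 x2 => x1 ≤ x2) := ⟨fun _ _ => le_antisymm⟩
  refine List.Perm.eq_of_pairwise (le := (· ≤ ·)) (fun _ _ _ _ h h' => le_antisymm h h') ?_ ?_ ?_
  rotate_right
  · rw [← Multiset.coe_eq_coe, Finset.sort_eq, ← Multiset.map_coe, Finset.sort_eq,
      Finset.map_val]
    rfl
  · exact Finset.pairwise_sort _ _
  · exact List.Pairwise.map _ (fun a b h => by simpa using h) (Finset.pairwise_sort _ _)

/-- sorting a finset whose max is `m` puts `m` at the end. -/
lemma sort_eq_append_max {n : ℕ} {B : Finset (Fin n)} {m : Fin n}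
    (hm : m ∈ B) (hmax : ∀ x ∈ B, x ≤ m) :
    B.sort (· ≤ ·) = (B.erase m).sort (· ≤ ·) ++ [m] := by
  haveI : IsAntisymm (Fin n) (fun x1 x2 => x1 ≤ x2) := ⟨fun _ _ => le_antisymm⟩
  refine List.Perm.eq_of_pairwise (le := (· ≤ ·)) (fun _ _ _ _ h h' => le_antisymm h h') ?_ ?_ ?_
  rotate_right
  · rw [← Multiset.coe_eq_coe]
    rw [Finset.sort_eq, ← Multiset.coe_add, Finset.sort_eq, Finset.erase_val, add_comm]
    show B.val = {m} + B.val.erase m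
    rw [Multiset.singleton_add, Multiset.cons_erase (by exact hm)]
  · exact Finset.pairwise_sort _ _
  · refine List.pairwise_append.mpr ⟨Finset.pairwise_sort _ _, List.pairwise_singleton _ _, ?_⟩
    intro x hx y hy
    rw [List.mem_singleton] at hy
    subst hy
    exact hmax x (Finset.mem_erase.mp ((Finset.mem_sort _).mp hx)).2

section Chunk2
variable {n : ℕ}

def upB (B : Finset (Fin n)) : Finset (Fin (n+1)) := B.map Fin.castSuccEmb

def downB (B : Finset (Fin (n+1))) : Finset (Fin n) :=
  Finset.univ.filter fun i => i.castSucc ∈ B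

def upP (P : Finset (Finset (Fin n))) : Finset (Finset (Fin (n+1))) := P.image upB

def downP (P : Finset (Finset (Fin (n+1)))) : Finset (Finset (Fin n)) :=
  (P.image downB).erase ∅

def extB (B : Finset (Fin (n+1))) : Finset (Fin (n+2)) :=
  if Fin.last n ∈ B then insert (Fin.last (n+1)) (upB B) else upB B

@[simp] lemma mem_downB {B : Finset (Fin (n+1))} {i : Fin n} :
    i ∈ downB B ↔ i.castSucc ∈ B := by simp [downB]

lemma mem_upB {B : Finset (Fin n)} {j : Fin (n+1)} :
    j ∈ upB B ↔ ∃ i ∈ B, i.castSucc = j := by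
  constructor
  · intro h
    obtain ⟨i, hi, h⟩ := Finset.mem_map.mp h
    exact ⟨i, hi, h⟩
  · rintro ⟨i, hi, h⟩
    exact Finset.mem_map.mpr ⟨i, hi, h⟩

@[simp] lemma castSucc_mem_upB {B : Finset (Fin n)} {i : Fin n} :
    i.castSucc ∈ upB B ↔ i ∈ B := by
  simp [mem_upB, Fin.castSucc_inj]

@[simp] lemma last_not_mem_upB {B : Finset (Fin n)} : Fin.last n ∉ upB B := by
  rw [mem_upB]
  rintro ⟨i, _, h⟩
  exact absurd h (Fin.castSucc_lt_last i).ne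

lemma upB_injective : Function.Injective (upB (n := n)) :=
  fun _ _ h => Finset.map_injective _ h

@[simp] lemma downB_upB (B : Finset (Fin n)) : downB (upB B) = B := by
  ext i; simp

lemma upB_downB {B : Finset (Fin (n+1))} (h : Fin.last n ∉ B) : upB (downB B) = B := by
  ext j
  rcases eq_or_ne j (Fin.last n) with rfl | hj
  · simp [h]
  · obtain ⟨i, rfl⟩ := Fin.eq_castSucc_of_ne_last hj
    simp

lemma upB_nonempty {B : Finset (Fin n)} (h : B.Nonempty) : (upB B).Nonempty := by
  obtain ⟨i, hi⟩ := h
  exact ⟨i.castSucc, castSucc_mem_upB.mpr hi⟩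

lemma downB_nonempty {B : Finset (Fin (n+1))} (h : B.Nonempty) (hl : Fin.last n ∉ B) :
    (downB B).Nonempty := by
  obtain ⟨j, hj⟩ := h
  obtain ⟨i, rfl⟩ := Fin.eq_castSucc_of_ne_last (fun h => hl (h ▸ hj))
  exact ⟨i, mem_downB.mpr hj⟩

@[simp] lemma upB_card (B : Finset (Fin n)) : (upB B).card = B.card :=
  Finset.card_map _

lemma upB_ne_singleton_last (B : Finset (Fin n)) : upB B ≠ {Fin.last n} := by
  intro h
  have : Fin.last n ∈ upB B := h ▸ Finset.mem_singleton_self _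
  exact last_not_mem_upB this

lemma extB_of_mem {B : Finset (Fin (n+1))} (h : Fin.last n ∈ B) :
    extB B = insert (Fin.last (n+1)) (upB B) := if_pos h

lemma extB_of_not_mem {B : Finset (Fin (n+1))} (h : Fin.last n ∉ B) : extB B = upB B :=
  if_neg h

lemma mem_extB_last {B : Finset (Fin (n+1))} :
    Fin.last (n+1) ∈ extB B ↔ Fin.last n ∈ B := by
  unfold extB
  split <;> simp_all

@[simp] lemma castSucc_mem_extB {B : Finset (Fin (n+1))} {i : Fin (n+1)} :
    i.castSucc ∈ extB B ↔ i ∈ B := by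
  unfold extB
  split <;>
    simp [Finset.mem_insert, (Fin.castSucc_lt_last i).ne]

lemma extB_injective : Function.Injective (extB (n := n)) := by
  intro B C h
  by_cases hB : Fin.last n ∈ B <;> by_cases hC : Fin.last n ∈ C
  · apply upB_injective
    have := congrArg (Finset.erase · (Fin.last (n+1))) h
    simpa [extB_of_mem hB, extB_of_mem hC,
      Finset.erase_insert (last_not_mem_upB (B := B)),
      Finset.erase_insert (last_not_mem_upB (B := C))] using this
  · exact absurd (mem_extB_last.mp (h ▸ mem_extB_last.mpr hB)) hC
  · exact absurd (mem_extB_last.mp (h.symm ▸ mem_extB_last.mpr hC)) hB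
  · apply upB_injective
    rwa [extB_of_not_mem hB, extB_of_not_mem hC] at h

lemma extB_nonempty {B : Finset (Fin (n+1))} (h : B.Nonempty) : (extB B).Nonempty := by
  unfold extB
  split
  · exact Finset.insert_nonempty _ _
  · exact upB_nonempty h

/-- two blocks of a partition sharing a point are equal -/
lemma part_eq {P : Finset (Finset (Fin n))} (h : IsPartition P) {B C : Finset (Fin n)}
    (hB : B ∈ P) (hC : C ∈ P) {i : Fin n} (hi : i ∈ B) (hi' : i ∈ C) : B = C := by
  obtain ⟨D, _, hu⟩ := h.2 i
  rw [hu B ⟨hB, hi⟩, hu C ⟨hC, hi'⟩]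

lemma blockOf_eq {P S : Finset (Finset (Fin n))} (h : IsPartition P) (hS : S ⊆ P)
    {B : Finset (Fin n)} {i : Fin n} (hB : B ∈ S) (hi : i ∈ B) : blockOf S i = B := by
  ext x
  simp only [blockOf, Finset.mem_filter, Finset.mem_univ, true_and]
  constructor
  · rintro ⟨C, hC, hiC, hxC⟩
    rwa [part_eq h (hS hC) (hS hB) hiC hi] at hxC
  · exact fun hx => ⟨B, hB, hi, hx⟩

lemma card_le_of_subset_part {P S : Finset (Finset (Fin n))} (h : IsPartition P)
    (hS : S ⊆ P) : S.card ≤ n := by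
  have hd : ∀ B ∈ S, ∀ C ∈ S, B ≠ C → Disjoint B C := by
    intro B hB C hC hne
    rw [Finset.disjoint_left]
    intro i hiB hiC
    exact hne (part_eq h (hS hB) (hS hC) hiB hiC)
  calc S.card = ∑ B ∈ S, 1 := by simp
    _ ≤ ∑ B ∈ S, B.card := Finset.sum_le_sum fun B hB =>
        Finset.card_pos.mpr (h.1 B (hS hB))
    _ = (S.biUnion id).card := (Finset.card_biUnion hd).symm
    _ ≤ (Finset.univ : Finset (Fin n)).card := Finset.card_le_card (Finset.subset_univ _)
    _ = n := Finset.card_univ.trans (Fintype.card_fin n)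

end Chunk2
section Chunk3
variable {n : ℕ} {M : Type*} [Ring M]

lemma mem_blockOf {S : Finset (Finset (Fin n))} {i x : Fin n} :
    x ∈ blockOf S i ↔ ∃ B ∈ S, i ∈ B ∧ x ∈ B := by simp [blockOf]

lemma aProd_congr {a b : Fin n → M} {B : Finset (Fin n)} (h : ∀ i ∈ B, a i = b i) :
    aProd a B = aProd b B := by
  unfold aProd
  congr 1
  apply List.map_congr_left
  intro i hi
  exact h i ((Finset.mem_sort _).mp hi)

lemma aProd_upB (a : Fin (n+1) → M) (B : Finset (Fin n)) :
    aProd a (upB B) = aProd (fun i => a i.castSucc) B := by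
  unfold aProd upB
  rw [sort_map_castSucc, List.map_map]
  rfl

@[simp] lemma aProd_singleton (a : Fin n → M) (i : Fin n) : aProd a {i} = a i := by
  unfold aProd
  rw [Finset.sort_singleton]
  simp

lemma aProd_erase_max (a : Fin n → M) {B : Finset (Fin n)} {m : Fin n} (hm : m ∈ B)
    (hmax : ∀ x ∈ B, x ≤ m) : aProd a B = aProd a (B.erase m) * a m := by
  unfold aProd
  rw [sort_eq_append_max hm hmax, List.map_append, List.prod_append]
  simp

def mx (T : Finset (Finset (Fin n))) : Finset (Fin n) :=
  Finset.univ.filter fun i => ∃ B ∈ T, i ∈ B ∧ ∀ x ∈ B, x ≤ i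

lemma mem_mx {T : Finset (Finset (Fin n))} {i : Fin n} :
    i ∈ mx T ↔ ∃ B ∈ T, i ∈ B ∧ ∀ x ∈ B, x ≤ i := by simp [mx]

lemma maxElts_eq_sort_mx (T : Finset (Finset (Fin n))) :
    maxElts T = (mx T).sort (· ≤ ·) := rfl

@[simp] lemma mx_empty : mx (∅ : Finset (Finset (Fin n))) = ∅ := by
  ext i; simp [mem_mx]

lemma mx_upP (S : Finset (Finset (Fin n))) : mx (upP S) = upB (mx S) := by
  ext j
  rw [mem_mx, mem_upB]
  constructor
  · rintro ⟨B', hB', hjB, hmax⟩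
    obtain ⟨B, hB, rfl⟩ := Finset.mem_image.mp hB'
    obtain ⟨i, hiB, rfl⟩ := mem_upB.mp hjB
    refine ⟨i, mem_mx.mpr ⟨B, hB, hiB, fun x hx => ?_⟩, rfl⟩
    exact Fin.castSucc_le_castSucc_iff.mp (hmax x.castSucc (castSucc_mem_upB.mpr hx))
  · rintro ⟨i, hi, rfl⟩
    obtain ⟨B, hB, hiB, hmax⟩ := mem_mx.mp hi
    refine ⟨upB B, Finset.mem_image.mpr ⟨B, hB, rfl⟩, castSucc_mem_upB.mpr hiB, ?_⟩
    intro x hx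
    obtain ⟨y, hy, rfl⟩ := mem_upB.mp hx
    exact Fin.castSucc_le_castSucc_iff.mpr (hmax y hy)

lemma mx_insert_last (S : Finset (Finset (Fin n))) :
    mx (insert {Fin.last n} (upP S)) = insert (Fin.last n) (upB (mx S)) := by
  ext j
  rw [mem_mx, Finset.mem_insert]
  constructor
  · rintro ⟨B', hB', hjB, hmax⟩
    rcases Finset.mem_insert.mp hB' with rfl | hB'
    · exact Or.inl (Finset.mem_singleton.mp hjB)
    · refine Or.inr ?_
      rw [← mx_upP]
      exact mem_mx.mpr ⟨B', hB', hjB, hmax⟩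
  · rintro (rfl | hj)
    · refine ⟨{Fin.last n}, Finset.mem_insert_self _ _, Finset.mem_singleton_self _, ?_⟩
      intro x hx
      exact (Finset.mem_singleton.mp hx).le
    · rw [← mx_upP] at hj
      obtain ⟨B, hB, h1, h2⟩ := mem_mx.mp hj
      exact ⟨B, Finset.mem_insert_of_mem hB, h1, h2⟩

lemma maxElts_upP (S : Finset (Finset (Fin n))) :
    maxElts (upP S) = (maxElts S).map Fin.castSucc := by
  rw [maxElts_eq_sort_mx, mx_upP, maxElts_eq_sort_mx]
  exact sort_map_castSucc _

lemma maxElts_insert_last (S : Finset (Finset (Fin n))) :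
    maxElts (insert {Fin.last n} (upP S))
      = (maxElts S).map Fin.castSucc ++ [Fin.last n] := by
  rw [maxElts_eq_sort_mx, mx_insert_last,
    sort_eq_append_max (Finset.mem_insert_self _ _) (fun x _ => Fin.le_last x),
    Finset.erase_insert last_not_mem_upB, maxElts_eq_sort_mx]
  exact congrArg (· ++ [Fin.last n]) (sort_map_castSucc _)

lemma blockOf_upP (S : Finset (Finset (Fin n))) (v : Fin n) :
    blockOf (upP S) v.castSucc = upB (blockOf S v) := by
  ext x
  rw [mem_blockOf, mem_upB]
  constructor
  · rintro ⟨B', hB', hv, hx⟩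
    obtain ⟨B, hB, rfl⟩ := Finset.mem_image.mp hB'
    obtain ⟨y, hy, rfl⟩ := mem_upB.mp hx
    exact ⟨y, mem_blockOf.mpr ⟨B, hB, castSucc_mem_upB.mp hv, hy⟩, rfl⟩
  · rintro ⟨y, hy, rfl⟩
    obtain ⟨B, hB, hvB, hyB⟩ := mem_blockOf.mp hy
    exact ⟨upB B, Finset.mem_image.mpr ⟨B, hB, rfl⟩, castSucc_mem_upB.mpr hvB,
      castSucc_mem_upB.mpr hyB⟩

lemma blockOf_insert_last_castSucc (S : Finset (Finset (Fin n))) (v : Fin n) :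
    blockOf (insert {Fin.last n} (upP S)) v.castSucc = upB (blockOf S v) := by
  ext x
  rw [← blockOf_upP, mem_blockOf, mem_blockOf]
  constructor
  · rintro ⟨B', hB', hv, hx⟩
    rcases Finset.mem_insert.mp hB' with rfl | hB'
    · exact absurd (Finset.mem_singleton.mp hv) (Fin.castSucc_lt_last v).ne
    · exact ⟨B', hB', hv, hx⟩
  · rintro ⟨B', hB', hv, hx⟩
    exact ⟨B', Finset.mem_insert_of_mem hB', hv, hx⟩

lemma blockOf_insert_last_last (S : Finset (Finset (Fin n))) :
    blockOf (insert {Fin.last n} (upP S)) (Fin.last n) = {Fin.last n} := by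
  ext x
  rw [mem_blockOf, Finset.mem_singleton]
  constructor
  · rintro ⟨B', hB', hl, hx⟩
    rcases Finset.mem_insert.mp hB' with rfl | hB'
    · exact Finset.mem_singleton.mp hx
    · obtain ⟨B, hB, rfl⟩ := Finset.mem_image.mp hB'
      exact absurd hl last_not_mem_upB
  · rintro rfl
    exact ⟨{Fin.last n}, Finset.mem_insert_self _ _, Finset.mem_singleton_self _,
      Finset.mem_singleton_self _⟩

lemma blockOf_image_ext_castSucc {S : Finset (Finset (Fin (n+1)))} {v : Fin (n+1)}
    (hv : ∀ B ∈ S, v ∈ B → Fin.last n ∉ B) :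
    blockOf (S.image extB) v.castSucc = upB (blockOf S v) := by
  ext x
  rw [mem_blockOf, mem_upB]
  constructor
  · rintro ⟨B', hB', hvB, hx⟩
    obtain ⟨B, hB, rfl⟩ := Finset.mem_image.mp hB'
    have hvB' : v ∈ B := castSucc_mem_extB.mp hvB
    rw [extB_of_not_mem (hv B hB hvB')] at hx
    obtain ⟨y, hy, rfl⟩ := mem_upB.mp hx
    exact ⟨y, mem_blockOf.mpr ⟨B, hB, hvB', hy⟩, rfl⟩
  · rintro ⟨y, hy, rfl⟩
    obtain ⟨B, hB, hvB, hyB⟩ := mem_blockOf.mp hy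
    refine ⟨extB B, Finset.mem_image.mpr ⟨B, hB, rfl⟩, castSucc_mem_extB.mpr hvB,
      castSucc_mem_extB.mpr hyB⟩

lemma blockOf_image_ext_last {S : Finset (Finset (Fin (n+1)))} {B0 : Finset (Fin (n+1))}
    (hB0 : B0 ∈ S) (hl : Fin.last n ∈ B0)
    (huniq : ∀ B ∈ S, Fin.last n ∈ B → B = B0) :
    blockOf (S.image extB) (Fin.last (n+1)) = extB B0 := by
  ext x
  rw [mem_blockOf]
  constructor
  · rintro ⟨B', hB', hlB, hx⟩
    obtain ⟨B, hB, rfl⟩ := Finset.mem_image.mp hB'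
    rw [huniq B hB (mem_extB_last.mp hlB)] at hx
    exact hx
  · intro hx
    exact ⟨extB B0, Finset.mem_image.mpr ⟨B0, hB0, rfl⟩, mem_extB_last.mpr hl, hx⟩

end Chunk3

section Chunk4
variable {n : ℕ} {M : Type*} [Ring M] [Algebra ℂ M]

def good (n : ℕ) (p : Finset (Finset (Fin n)) × Finset (Finset (Fin n))) : Prop :=
  IsPartition p.1 ∧ IsIntervalPartition p.1 ∧ p.2 ⊆ p.1 ∧
    ∀ U ∈ p.1, U ∉ p.2 → U.card = 1

def trm (E : M →ₗ[ℂ] ℂ) (n : ℕ) (a : Fin n → M)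
    (p : Finset (Finset (Fin n)) × Finset (Finset (Fin n))) : TensorAlgebra ℂ M :=
  ((-1 : ℂ) ^ (n - p.2.card) * ∏ U ∈ p.1 \ p.2, E (aProd a U)) •
    ((maxElts p.2).map fun v => TensorAlgebra.ι ℂ (aProd a (blockOf p.2 v))).prod

def RHS (E : M →ₗ[ℂ] ℂ) (n : ℕ) (a : Fin n → M) : TensorAlgebra ℂ M :=
  ∑ p ∈ Finset.univ.filter (good n), trm E n a p

lemma sum_eq_RHS (E : M →ₗ[ℂ] ℂ) (a : Fin n → M) :
    (∑ π ∈ Finset.univ.filter (fun π : Finset (Finset (Fin n)) =>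
        IsPartition π ∧ IsIntervalPartition π),
      ∑ S ∈ π.powerset.filter (fun S => ∀ U ∈ π, U ∉ S → U.card = 1),
        ((-1 : ℂ) ^ (n - S.card) * ∏ U ∈ π \ S, E (aProd a U)) •
          ((maxElts S).map fun v =>
            TensorAlgebra.ι ℂ (aProd a (blockOf S v))).prod)
      = RHS E n a := by
  have hR : RHS E n a = ∑ π : Finset (Finset (Fin n)), ∑ S : Finset (Finset (Fin n)),
      if good n (π, S) then trm E n a (π, S) else 0 := by
    rw [RHS, Finset.sum_filter, ← Finset.univ_product_univ, Finset.sum_product]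
  rw [hR, Finset.sum_filter]
  refine Finset.sum_congr rfl fun π _ => ?_
  by_cases hπ : IsPartition π ∧ IsIntervalPartition π
  · rw [if_pos hπ, Finset.sum_filter]
    rw [← Finset.sum_subset (Finset.subset_univ π.powerset)]
    · refine Finset.sum_congr rfl fun S hS => ?_
      by_cases hc : ∀ U ∈ π, U ∉ S → U.card = 1
      · rw [if_pos hc, if_pos ⟨hπ.1, hπ.2, Finset.mem_powerset.mp hS, hc⟩, trm]
      · rw [if_neg hc, if_neg (fun hg => hc hg.2.2.2)]
    · intro S _ hS
      rw [if_neg (fun hg => hS (Finset.mem_powerset.mpr hg.2.2.1))]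
  · rw [if_neg hπ]
    symm
    apply Finset.sum_eq_zero
    intro S _
    rw [if_neg (fun hg => hπ ⟨hg.1, hg.2.1⟩)]

lemma RHS_zero (E : M →ₗ[ℂ] ℂ) (a : Fin 0 → M) : RHS E 0 a = 1 := by
  have h : (Finset.univ.filter (good 0)) = {((∅ : Finset (Finset (Fin 0))), ∅)} := by
    ext p
    simp only [Finset.mem_filter, Finset.mem_univ, true_and, Finset.mem_singleton]
    constructor
    · rintro ⟨h1, _, h3, _⟩
      have hp1 : p.1 = ∅ := by
        rw [Finset.eq_empty_iff_forall_notMem]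
        intro B hB
        obtain ⟨i, _⟩ := h1.1 B hB
        exact i.elim0
      have hp2 : p.2 = ∅ := Finset.subset_empty.mp (hp1 ▸ h3)
      exact Prod.ext hp1 hp2
    · rintro rfl
      refine ⟨⟨fun B hB => absurd hB (Finset.notMem_empty _), fun i => i.elim0⟩,
        fun B hB => absurd hB (Finset.notMem_empty _), Finset.Subset.refl _,
        fun U hU => absurd hU (Finset.notMem_empty _)⟩
  rw [RHS, h, Finset.sum_singleton, trm]
  simp [maxElts_eq_sort_mx]

lemma isPartition_up {π : Finset (Finset (Fin n))} (h : IsPartition π) :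
    IsPartition (insert {Fin.last n} (upP π)) := by
  constructor
  · intro B hB
    rcases Finset.mem_insert.mp hB with rfl | hB
    · exact ⟨_, Finset.mem_singleton_self _⟩
    · obtain ⟨C, hC, rfl⟩ := Finset.mem_image.mp hB
      exact upB_nonempty (h.1 C hC)
  · intro i
    rcases eq_or_ne i (Fin.last n) with rfl | hi
    · refine ⟨{Fin.last n}, ⟨Finset.mem_insert_self _ _, Finset.mem_singleton_self _⟩, ?_⟩
      rintro B ⟨hB, hiB⟩
      rcases Finset.mem_insert.mp hB with rfl | hB
      · rfl
      · obtain ⟨C, hC, rfl⟩ := Finset.mem_image.mp hB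
        exact absurd hiB last_not_mem_upB
    · obtain ⟨j, rfl⟩ := Fin.eq_castSucc_of_ne_last hi
      obtain ⟨B, ⟨hB, hjB⟩, hu⟩ := h.2 j
      refine ⟨upB B, ⟨Finset.mem_insert_of_mem (Finset.mem_image.mpr ⟨B, hB, rfl⟩),
        castSucc_mem_upB.mpr hjB⟩, ?_⟩
      rintro C ⟨hC, hjC⟩
      rcases Finset.mem_insert.mp hC with rfl | hC
      · exact absurd (Finset.mem_singleton.mp hjC) (Fin.castSucc_lt_last j).ne
      · obtain ⟨D, hD, rfl⟩ := Finset.mem_image.mp hC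
        rw [hu D ⟨hD, castSucc_mem_upB.mp hjC⟩]

lemma isInterval_up {π : Finset (Finset (Fin n))} (hI : IsIntervalPartition π) :
    IsIntervalPartition (insert {Fin.last n} (upP π)) := by
  intro B hB i hi j hj k hik hkj
  rcases Finset.mem_insert.mp hB with rfl | hB
  · rw [Finset.mem_singleton] at hi hj ⊢
    subst hi
    exact le_antisymm (Fin.le_last k) hik
  · obtain ⟨C, hC, rfl⟩ := Finset.mem_image.mp hB
    obtain ⟨i0, hi0, rfl⟩ := mem_upB.mp hi
    obtain ⟨j0, hj0, rfl⟩ := mem_upB.mp hj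
    have hkne : k ≠ Fin.last n := by
      rintro rfl
      exact absurd (hkj.trans_lt (Fin.castSucc_lt_last j0)) (lt_irrefl _)
    obtain ⟨k0, rfl⟩ := Fin.eq_castSucc_of_ne_last hkne
    exact castSucc_mem_upB.mpr (hI C hC i0 hi0 j0 hj0 k0
      (Fin.castSucc_le_castSucc_iff.mp hik) (Fin.castSucc_le_castSucc_iff.mp hkj))

lemma prod_map_up (a : Fin (n+1) → M) (S : Finset (Finset (Fin n))) :
    ((maxElts (upP S)).map fun v => TensorAlgebra.ι ℂ (aProd a (blockOf (upP S) v))).prod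
      = ((maxElts S).map fun v =>
          TensorAlgebra.ι ℂ (aProd (Fin.init a) (blockOf S v))).prod := by
  rw [maxElts_upP, List.map_map]
  refine congrArg List.prod (List.map_congr_left fun v _ => ?_)
  simp only [Function.comp_apply, blockOf_upP, aProd_upB]
  rfl

lemma prod_map_up_insert (a : Fin (n+1) → M) (S : Finset (Finset (Fin n))) :
    ((maxElts (insert {Fin.last n} (upP S))).map fun v =>
        TensorAlgebra.ι ℂ (aProd a (blockOf (insert {Fin.last n} (upP S)) v))).prod
      = ((maxElts S).map fun v =>
          TensorAlgebra.ι ℂ (aProd (Fin.init a) (blockOf S v))).prod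
        * TensorAlgebra.ι ℂ (a (Fin.last n)) := by
  rw [maxElts_insert_last, List.map_append, List.prod_append, List.map_map]
  congr 1
  · refine congrArg List.prod (List.map_congr_left fun v _ => ?_)
    simp only [Function.comp_apply, blockOf_insert_last_castSucc, aProd_upB]
    rfl
  · simp [blockOf_insert_last_last]

lemma prod_sdiff_up (E : M →ₗ[ℂ] ℂ) (a : Fin (n+1) → M)
    (π S : Finset (Finset (Fin n))) :
    (∏ U ∈ upP π \ upP S, E (aProd a U)) = ∏ U ∈ π \ S, E (aProd (Fin.init a) U) := by
  rw [upP, upP, ← Finset.image_sdiff _ _ upB_injective, Finset.prod_image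
    (fun x _ y _ h => upB_injective h)]
  refine Finset.prod_congr rfl fun U _ => ?_
  rw [aProd_upB]
  rfl

end Chunk4

section Chunk5
variable {n : ℕ}

def cls (n : ℕ) (p : Finset (Finset (Fin (n+1))) × Finset (Finset (Fin (n+1)))) : Prop :=
  ∃ B ∈ p.2, Fin.last n ∈ B

lemma closed_struct {p : Finset (Finset (Fin (n+1))) × Finset (Finset (Fin (n+1)))}
    (hg : good (n+1) p) (hc : ¬ cls n p) :
    {Fin.last n} ∈ p.1 ∧ {Fin.last n} ∉ p.2 := by
  obtain ⟨B, ⟨hB, hlB⟩, _⟩ := hg.1.2 (Fin.last n)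
  have hBS : B ∉ p.2 := fun h => hc ⟨B, h, hlB⟩
  obtain ⟨x, rfl⟩ := Finset.card_eq_one.mp (hg.2.2.2 B hB hBS)
  have hx : x = Fin.last n := (Finset.mem_singleton.mp hlB).symm
  subst hx
  exact ⟨hB, hBS⟩

lemma not_last_mem_of_ne {π' : Finset (Finset (Fin (n+1)))} (h : IsPartition π')
    (hs : {Fin.last n} ∈ π') {B : Finset (Fin (n+1))} (hB : B ∈ π')
    (hne : B ≠ {Fin.last n}) : Fin.last n ∉ B :=
  fun hl => hne (part_eq h hB hs hl (Finset.mem_singleton_self _))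

lemma downB_singleton_castSucc (y : Fin n) :
    downB ({y.castSucc} : Finset (Fin (n+1))) = {y} := by
  ext i
  simp [Fin.castSucc_inj]

lemma downP_eq {π' : Finset (Finset (Fin (n+1)))} (h : IsPartition π')
    (hs : {Fin.last n} ∈ π') :
    downP π' = (π'.erase {Fin.last n}).image downB := by
  rw [downP]
  conv_lhs => rw [← Finset.insert_erase hs]
  rw [Finset.image_insert]
  have hd : downB ({Fin.last n} : Finset (Fin (n+1))) = ∅ := by
    ext i
    simp [(Fin.castSucc_lt_last i).ne]
  rw [hd]
  apply Finset.erase_insert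
  intro hmem
  obtain ⟨B, hB, hBe⟩ := Finset.mem_image.mp hmem
  have hBne := Finset.mem_erase.mp hB
  have hne := downB_nonempty (h.1 B hBne.2) (not_last_mem_of_ne h hs hBne.2 hBne.1)
  rw [hBe] at hne
  exact Finset.not_nonempty_empty hne

lemma upP_downP {π' : Finset (Finset (Fin (n+1)))} (h : IsPartition π')
    (hs : {Fin.last n} ∈ π') : upP (downP π') = π'.erase {Fin.last n} := by
  rw [downP_eq h hs, upP, Finset.image_image]
  rw [Finset.image_congr (g := id) (fun B hB => by
    have hBne := Finset.mem_erase.mp hB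
    exact upB_downB (not_last_mem_of_ne h hs hBne.2 hBne.1))]
  exact Finset.image_id

lemma downP_eq_S {π' S' : Finset (Finset (Fin (n+1)))} (h : IsPartition π')
    (hs : {Fin.last n} ∈ π') (hS : S' ⊆ π') (hls : {Fin.last n} ∉ S') :
    downP S' = S'.image downB := by
  rw [downP]
  apply Finset.erase_eq_of_notMem
  intro hmem
  obtain ⟨B, hB, hBe⟩ := Finset.mem_image.mp hmem
  have hne := downB_nonempty (h.1 B (hS hB))
    (not_last_mem_of_ne h hs (hS hB) (fun he => hls (he ▸ hB)))
  rw [hBe] at hne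
  exact Finset.not_nonempty_empty hne

lemma upP_downP_S {π' S' : Finset (Finset (Fin (n+1)))} (h : IsPartition π')
    (hs : {Fin.last n} ∈ π') (hS : S' ⊆ π') (hls : {Fin.last n} ∉ S') :
    upP (downP S') = S' := by
  rw [downP_eq_S h hs hS hls, upP, Finset.image_image]
  rw [Finset.image_congr (g := id) (fun B hB => by
    exact upB_downB (not_last_mem_of_ne h hs (hS hB) (fun he => hls (he ▸ hB))))]
  exact Finset.image_id

lemma upP_card (S : Finset (Finset (Fin n))) : (upP S).card = S.card :=
  Finset.card_image_of_injective _ upB_injective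

lemma downP_card_S {π' S' : Finset (Finset (Fin (n+1)))} (h : IsPartition π')
    (hs : {Fin.last n} ∈ π') (hS : S' ⊆ π') (hls : {Fin.last n} ∉ S') :
    (downP S').card = S'.card := by
  conv_rhs => rw [← upP_downP_S h hs hS hls]
  rw [upP_card]

lemma isPartition_down {π' : Finset (Finset (Fin (n+1)))} (h : IsPartition π')
    (hs : {Fin.last n} ∈ π') : IsPartition (downP π') := by
  rw [downP_eq h hs]
  constructor
  · intro B hB
    obtain ⟨C, hC, rfl⟩ := Finset.mem_image.mp hB
    have hCne := Finset.mem_erase.mp hC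
    exact downB_nonempty (h.1 C hCne.2) (not_last_mem_of_ne h hs hCne.2 hCne.1)
  · intro i
    obtain ⟨B, ⟨hB, hiB⟩, hu⟩ := h.2 i.castSucc
    have hBne : B ≠ {Fin.last n} := by
      rintro rfl
      exact (Fin.castSucc_lt_last i).ne (Finset.mem_singleton.mp hiB)
    refine ⟨downB B, ⟨Finset.mem_image.mpr ⟨B, Finset.mem_erase.mpr ⟨hBne, hB⟩, rfl⟩,
      mem_downB.mpr hiB⟩, ?_⟩
    rintro C ⟨hC, hiC⟩
    obtain ⟨D, hD, rfl⟩ := Finset.mem_image.mp hC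
    rw [hu D ⟨(Finset.mem_erase.mp hD).2, mem_downB.mp hiC⟩]

lemma isInterval_down {π' : Finset (Finset (Fin (n+1)))} (h : IsPartition π')
    (hI : IsIntervalPartition π') (hs : {Fin.last n} ∈ π') :
    IsIntervalPartition (downP π') := by
  rw [downP_eq h hs]
  intro B hB i hi j hj k hik hkj
  obtain ⟨C, hC, rfl⟩ := Finset.mem_image.mp hB
  refine mem_downB.mpr (hI C (Finset.mem_erase.mp hC).2 i.castSucc (mem_downB.mp hi)
    j.castSucc (mem_downB.mp hj) k.castSucc ?_ ?_)
  · exact Fin.castSucc_le_castSucc_iff.mpr hik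
  · exact Fin.castSucc_le_castSucc_iff.mpr hkj

lemma good_down {p : Finset (Finset (Fin (n+1))) × Finset (Finset (Fin (n+1)))}
    (hg : good (n+1) p) (hs : {Fin.last n} ∈ p.1) (hls : {Fin.last n} ∉ p.2) :
    good n (downP p.1, downP p.2) := by
  obtain ⟨h1, h2, h3, h4⟩ := hg
  refine ⟨isPartition_down h1 hs, isInterval_down h1 h2 hs, ?_, ?_⟩
  · rw [downP_eq h1 hs, downP_eq_S h1 hs h3 hls]
    apply Finset.image_subset_image
    intro B hB
    exact Finset.mem_erase.mpr ⟨fun he => hls (he ▸ hB), h3 hB⟩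
  · intro U hU hUS
    rw [downP_eq h1 hs] at hU
    obtain ⟨B, hB, rfl⟩ := Finset.mem_image.mp hU
    have hBmem := (Finset.mem_erase.mp hB).2
    have hBne := (Finset.mem_erase.mp hB).1
    have hBS : B ∉ p.2 := by
      intro hBS
      apply hUS
      rw [downP_eq_S h1 hs h3 hls]
      exact Finset.mem_image.mpr ⟨B, hBS, rfl⟩
    obtain ⟨x, rfl⟩ := Finset.card_eq_one.mp (h4 B hBmem hBS)
    have hxne : x ≠ Fin.last n := fun he => hBne (he ▸ rfl)
    obtain ⟨y, rfl⟩ := Fin.eq_castSucc_of_ne_last hxne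
    rw [downB_singleton_castSucc]
    exact Finset.card_singleton y

lemma downP_insert_upP {π : Finset (Finset (Fin n))} (h : IsPartition π) :
    downP (insert {Fin.last n} (upP π)) = π := by
  rw [downP_eq (isPartition_up h) (Finset.mem_insert_self _ _), Finset.erase_insert]
  · rw [upP, Finset.image_image]
    rw [Finset.image_congr (f := downB ∘ upB) (g := id) (fun B _ => downB_upB B)]
    exact Finset.image_id
  · intro hmem
    obtain ⟨B, _, hBe⟩ := Finset.mem_image.mp hmem
    exact upB_ne_singleton_last B hBe

lemma downP_upP {π S : Finset (Finset (Fin n))} (h : IsPartition π) (hS : S ⊆ π) :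
    downP (upP S) = S := by
  rw [downP, upP, Finset.image_image]
  rw [Finset.image_congr (f := downB ∘ upB) (g := id) (fun B _ => downB_upB B)]
  rw [Finset.image_id]
  apply Finset.erase_eq_of_notMem
  intro hmem
  exact Finset.not_nonempty_empty (h.1 ∅ (hS hmem))

end Chunk5

section Chunk6
variable {n : ℕ} {M : Type*} [Ring M] [Algebra ℂ M]

lemma downB_singleton_last : downB ({Fin.last n} : Finset (Fin (n+1))) = ∅ := by
  ext i
  simp [(Fin.castSucc_lt_last i).ne]

lemma singleton_last_not_mem_upP (S : Finset (Finset (Fin n))) :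
    {Fin.last n} ∉ upP S := by
  intro hmem
  obtain ⟨B, _, hBe⟩ := Finset.mem_image.mp hmem
  exact upB_ne_singleton_last B hBe

lemma insert_sdiff_insert_eq {α : Type*} [DecidableEq α] {x : α} {A B : Finset α}
    (hx : x ∉ A) : (insert x A) \ (insert x B) = A \ B := by
  ext U
  simp only [Finset.mem_sdiff, Finset.mem_insert]
  constructor
  · rintro ⟨(rfl | h1), h2⟩
    · exact absurd (Or.inl rfl) h2
    · exact ⟨h1, fun hU => h2 (Or.inr hU)⟩
  · rintro ⟨h1, h2⟩
    refine ⟨Or.inr h1, ?_⟩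
    rintro (rfl | hU)
    exacts [hx h1, h2 hU]

lemma downP_insert_upP_S {S : Finset (Finset (Fin n))} (hne : ∅ ∉ S) :
    downP (insert {Fin.last n} (upP S)) = S := by
  rw [downP, Finset.image_insert, downB_singleton_last, upP, Finset.image_image]
  rw [Finset.image_congr (f := downB ∘ upB) (g := id) (fun B _ => downB_upB B),
    Finset.image_id]
  exact Finset.erase_insert hne

lemma downP_T_eq {π' T : Finset (Finset (Fin (n+1)))} (h : IsPartition π')
    (hT : T ⊆ π') (hlT : {Fin.last n} ∈ T) :
    downP T = (T.erase {Fin.last n}).image downB := by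
  rw [downP]
  conv_lhs => rw [← Finset.insert_erase hlT]
  rw [Finset.image_insert, downB_singleton_last]
  apply Finset.erase_insert
  intro hmem
  obtain ⟨B, hB, hBe⟩ := Finset.mem_image.mp hmem
  have hBne := Finset.mem_erase.mp hB
  have hne := downB_nonempty (h.1 B (hT hBne.2))
    (not_last_mem_of_ne h (hT hlT) (hT hBne.2) hBne.1)
  rw [hBe] at hne
  exact Finset.not_nonempty_empty hne

lemma upP_downP_T {π' T : Finset (Finset (Fin (n+1)))} (h : IsPartition π')
    (hT : T ⊆ π') (hlT : {Fin.last n} ∈ T) :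
    upP (downP T) = T.erase {Fin.last n} := by
  rw [downP_T_eq h hT hlT, upP, Finset.image_image]
  rw [Finset.image_congr (f := upB ∘ downB) (g := id) (fun B hB => by
    have hBne := Finset.mem_erase.mp hB
    exact upB_downB (not_last_mem_of_ne h (hT hlT) (hT hBne.2) hBne.1))]
  exact Finset.image_id

lemma good_down_open {p : Finset (Finset (Fin (n+1))) × Finset (Finset (Fin (n+1)))}
    (hg : good (n+1) p) (hl : {Fin.last n} ∈ p.2) :
    good n (downP p.1, downP p.2) := by
  obtain ⟨h1, h2, h3, h4⟩ := hg
  have hs : {Fin.last n} ∈ p.1 := h3 hl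
  refine ⟨isPartition_down h1 hs, isInterval_down h1 h2 hs, ?_, ?_⟩
  · rw [downP_eq h1 hs, downP_T_eq h1 h3 hl]
    apply Finset.image_subset_image
    exact Finset.erase_subset_erase _ h3
  · intro U hU hUS
    rw [downP_eq h1 hs] at hU
    obtain ⟨B, hB, rfl⟩ := Finset.mem_image.mp hU
    have hBmem := (Finset.mem_erase.mp hB).2
    have hBne := (Finset.mem_erase.mp hB).1
    have hBS : B ∉ p.2 := by
      intro hBS
      apply hUS
      rw [downP_T_eq h1 h3 hl]
      exact Finset.mem_image.mpr ⟨B, Finset.mem_erase.mpr ⟨hBne, hBS⟩, rfl⟩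
    obtain ⟨x, rfl⟩ := Finset.card_eq_one.mp (h4 B hBmem hBS)
    have hxne : x ≠ Fin.last n := fun he => hBne (he ▸ rfl)
    obtain ⟨y, rfl⟩ := Fin.eq_castSucc_of_ne_last hxne
    rw [downB_singleton_castSucc]
    exact Finset.card_singleton y

lemma good_up_closed {p : Finset (Finset (Fin n)) × Finset (Finset (Fin n))}
    (hg : good n p) :
    good (n+1) (insert {Fin.last n} (upP p.1), upP p.2)
      ∧ ¬ cls n (insert {Fin.last n} (upP p.1), upP p.2) := by
  obtain ⟨h1, h2, h3, h4⟩ := hg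
  constructor
  · refine ⟨isPartition_up h1, isInterval_up h2, ?_, ?_⟩
    · exact fun B hB => Finset.mem_insert_of_mem (Finset.image_subset_image h3 hB)
    · intro U hU hUS
      rcases Finset.mem_insert.mp hU with rfl | hU
      · exact Finset.card_singleton _
      · obtain ⟨C, hC, rfl⟩ := Finset.mem_image.mp hU
        rw [upB_card]
        exact h4 C hC (fun hCS => hUS (Finset.mem_image.mpr ⟨C, hCS, rfl⟩))
  · rintro ⟨B, hB, hlB⟩
    obtain ⟨C, _, rfl⟩ := Finset.mem_image.mp hB
    exact last_not_mem_upB hlB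

lemma good_up_open {p : Finset (Finset (Fin n)) × Finset (Finset (Fin n))}
    (hg : good n p) :
    good (n+1) (insert {Fin.last n} (upP p.1), insert {Fin.last n} (upP p.2))
      ∧ {Fin.last n} ∈ insert {Fin.last n} (upP p.2) := by
  obtain ⟨h1, h2, h3, h4⟩ := hg
  refine ⟨⟨isPartition_up h1, isInterval_up h2, ?_, ?_⟩, Finset.mem_insert_self _ _⟩
  · exact Finset.insert_subset_insert _ (Finset.image_subset_image h3)
  · intro U hU hUS
    rcases Finset.mem_insert.mp hU with rfl | hU
    · exact Finset.card_singleton _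
    · obtain ⟨C, hC, rfl⟩ := Finset.mem_image.mp hU
      rw [upB_card]
      exact h4 C hC (fun hCS =>
        hUS (Finset.mem_insert_of_mem (Finset.mem_image.mpr ⟨C, hCS, rfl⟩)))

lemma sum_closed (E : M →ₗ[ℂ] ℂ) (a : Fin (n+1) → M) :
    ∑ p ∈ Finset.univ.filter (fun p => good (n+1) p ∧ ¬ cls n p), trm E (n+1) a p
      = (-(E (a (Fin.last n)))) • RHS E n (Fin.init a) := by
  rw [RHS, Finset.smul_sum]
  symm
  refine Finset.sum_nbij'
    (i := fun p => (insert {Fin.last n} (upP p.1), upP p.2))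
    (j := fun p => (downP p.1, downP p.2)) ?_ ?_ ?_ ?_ ?_
  · intro p hp
    have hg := (Finset.mem_filter.mp hp).2
    exact Finset.mem_filter.mpr ⟨Finset.mem_univ _, good_up_closed hg⟩
  · intro p hp
    obtain ⟨_, hg, hc⟩ := Finset.mem_filter.mp hp
    obtain ⟨hs, hls⟩ := closed_struct hg hc
    exact Finset.mem_filter.mpr ⟨Finset.mem_univ _, good_down hg hs hls⟩
  · intro p hp
    have hg := (Finset.mem_filter.mp hp).2
    exact Prod.ext (downP_insert_upP hg.1)
      (downP_upP hg.1 hg.2.2.1)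
  · intro p hp
    obtain ⟨_, hg, hc⟩ := Finset.mem_filter.mp hp
    obtain ⟨hs, hls⟩ := closed_struct hg hc
    refine Prod.ext ?_ ?_
    · show insert {Fin.last n} (upP (downP p.1)) = p.1
      rw [upP_downP hg.1 hs]
      exact Finset.insert_erase hs
    · show upP (downP p.2) = p.2
      exact upP_downP_S hg.1 hs hg.2.2.1 hls
  · intro p hp
    have hg := (Finset.mem_filter.mp hp).2
    rw [trm, trm]
    have hle : p.2.card ≤ n := card_le_of_subset_part hg.1 hg.2.2.1
    have hsd : (insert {Fin.last n} (upP p.1)) \ upP p.2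
        = insert {Fin.last n} (upP p.1 \ upP p.2) :=
      Finset.insert_sdiff_of_notMem _ (singleton_last_not_mem_upP p.2)
    have hnm : {Fin.last n} ∉ upP p.1 \ upP p.2 :=
      fun h => singleton_last_not_mem_upP p.1 (Finset.mem_sdiff.mp h).1
    rw [upP_card, hsd, Finset.prod_insert hnm, prod_sdiff_up, aProd_singleton,
      prod_map_up, smul_smul]
    congr 1
    rw [show n + 1 - p.2.card = (n - p.2.card) + 1 from by omega, pow_succ]
    ring

lemma sum_openSingleton (E : M →ₗ[ℂ] ℂ) (a : Fin (n+1) → M) :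
    ∑ p ∈ Finset.univ.filter (fun p => good (n+1) p ∧ {Fin.last n} ∈ p.2),
        trm E (n+1) a p
      = RHS E n (Fin.init a) * TensorAlgebra.ι ℂ (a (Fin.last n)) := by
  rw [RHS, Finset.sum_mul]
  symm
  refine Finset.sum_nbij'
    (i := fun p => (insert {Fin.last n} (upP p.1), insert {Fin.last n} (upP p.2)))
    (j := fun p => (downP p.1, downP p.2)) ?_ ?_ ?_ ?_ ?_
  · intro p hp
    have hg := (Finset.mem_filter.mp hp).2
    exact Finset.mem_filter.mpr ⟨Finset.mem_univ _, good_up_open hg⟩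
  · intro p hp
    obtain ⟨_, hg, hl⟩ := Finset.mem_filter.mp hp
    exact Finset.mem_filter.mpr ⟨Finset.mem_univ _, good_down_open hg hl⟩
  · intro p hp
    have hg := (Finset.mem_filter.mp hp).2
    refine Prod.ext (downP_insert_upP hg.1) ?_
    show downP (insert {Fin.last n} (upP p.2)) = p.2
    exact downP_insert_upP_S (fun h => Finset.not_nonempty_empty
      (hg.1.1 ∅ (hg.2.2.1 h)))
  · intro p hp
    obtain ⟨_, hg, hl⟩ := Finset.mem_filter.mp hp
    have hs : {Fin.last n} ∈ p.1 := hg.2.2.1 hl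
    refine Prod.ext ?_ ?_
    · show insert {Fin.last n} (upP (downP p.1)) = p.1
      rw [upP_downP hg.1 hs]
      exact Finset.insert_erase hs
    · show insert {Fin.last n} (upP (downP p.2)) = p.2
      rw [upP_downP_T hg.1 hg.2.2.1 hl]
      exact Finset.insert_erase hl
  · intro p hp
    have hg := (Finset.mem_filter.mp hp).2
    rw [trm, trm]
    have hle : p.2.card ≤ n := card_le_of_subset_part hg.1 hg.2.2.1
    rw [Finset.card_insert_of_notMem (singleton_last_not_mem_upP p.2), upP_card,
      insert_sdiff_insert_eq (singleton_last_not_mem_upP p.1), prod_sdiff_up,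
      prod_map_up_insert, Nat.succ_sub_succ, smul_mul_assoc]

end Chunk6

section Chunk7a
variable {n : ℕ}

lemma upB_downB_erase (B : Finset (Fin (n+1))) :
    upB (downB B) = B.erase (Fin.last n) := by
  ext j
  rcases eq_or_ne j (Fin.last n) with rfl | hj
  · simp
  · obtain ⟨i, rfl⟩ := Fin.eq_castSucc_of_ne_last hj
    simp [Finset.mem_erase, (Fin.castSucc_lt_last i).ne]

lemma downB_extB (C : Finset (Fin (n+1))) : downB (extB C) = C := by
  by_cases h : Fin.last n ∈ C
  · rw [extB_of_mem h]
    ext i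
    simp [Finset.mem_insert, (Fin.castSucc_lt_last i).ne]
  · rw [extB_of_not_mem h, downB_upB]

lemma extB_downB_of_not_mem {B : Finset (Fin (n+2))} (hl : Fin.last (n+1) ∉ B)
    (hcs : (Fin.last n).castSucc ∉ B) : extB (downB B) = B := by
  have : Fin.last n ∉ downB B := fun h => hcs (mem_downB.mp h)
  rw [extB_of_not_mem this, upB_downB_erase, Finset.erase_eq_of_notMem hl]

lemma extB_downB_of_mem {B : Finset (Fin (n+2))} (hl : Fin.last (n+1) ∈ B)
    (hcs : (Fin.last n).castSucc ∈ B) : extB (downB B) = B := by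
  have : Fin.last n ∈ downB B := mem_downB.mpr hcs
  rw [extB_of_mem this, upB_downB_erase, Finset.insert_erase hl]

lemma ne_last_le_castSucc {x : Fin (n+2)} (hx : x ≠ Fin.last (n+1)) :
    x ≤ (Fin.last n).castSucc := by
  rw [Fin.le_def]
  have hxv : x.val < n + 2 := x.isLt
  have : x.val ≠ n + 1 := fun h => hx (Fin.ext h)
  simp only [Fin.coe_castSucc, Fin.val_last]
  omega

lemma csl_mem_of_big {π' : Finset (Finset (Fin (n+2)))} (hI : IsIntervalPartition π')
    {B : Finset (Fin (n+2))} (hB : B ∈ π') (hl : Fin.last (n+1) ∈ B)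
    (hne : B ≠ {Fin.last (n+1)}) : (Fin.last n).castSucc ∈ B := by
  have hex : ∃ x ∈ B, x ≠ Fin.last (n+1) := by
    by_contra hc
    push_neg at hc
    exact hne (Finset.eq_singleton_iff_unique_mem.mpr ⟨hl, hc⟩)
  obtain ⟨x, hx, hxne⟩ := hex
  exact hI B hB x hx (Fin.last (n+1)) hl ((Fin.last n).castSucc)
    (ne_last_le_castSucc hxne) (Fin.le_last _)

lemma mem_mx_of_block {S : Finset (Finset (Fin (n+1)))} {B0 : Finset (Fin (n+1))}
    (hB0 : B0 ∈ S) (hl : Fin.last n ∈ B0) : Fin.last n ∈ mx S :=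
  mem_mx.mpr ⟨B0, hB0, hl, fun x _ => Fin.le_last x⟩

lemma mx_image_ext {π S : Finset (Finset (Fin (n+1)))} (h : IsPartition π) (hS : S ⊆ π)
    {B0 : Finset (Fin (n+1))} (hB0 : B0 ∈ S) (hl : Fin.last n ∈ B0) :
    mx (S.image extB)
      = insert (Fin.last (n+1)) (upB ((mx S).erase (Fin.last n))) := by
  ext j
  rw [mem_mx, Finset.mem_insert]
  constructor
  · rintro ⟨B', hB', hjB, hmax⟩
    obtain ⟨C, hC, rfl⟩ := Finset.mem_image.mp hB'
    by_cases hlC : Fin.last n ∈ C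
    · left
      have : Fin.last (n+1) ∈ extB C := mem_extB_last.mpr hlC
      exact le_antisymm (Fin.le_last j) (hmax _ this)
    · right
      rw [extB_of_not_mem hlC] at hjB hmax
      obtain ⟨j0, hj0, rfl⟩ := mem_upB.mp hjB
      refine castSucc_mem_upB.mpr (Finset.mem_erase.mpr ⟨?_, mem_mx.mpr ⟨C, hC, hj0, ?_⟩⟩)
      · exact fun he => hlC (he ▸ hj0)
      · intro x hx
        exact Fin.castSucc_le_castSucc_iff.mp (hmax _ (castSucc_mem_upB.mpr hx))
  · rintro (rfl | hj)
    · refine ⟨extB B0, Finset.mem_image.mpr ⟨B0, hB0, rfl⟩, mem_extB_last.mpr hl,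
        fun x _ => Fin.le_last x⟩
    · obtain ⟨j0, hj0, rfl⟩ := mem_upB.mp hj
      obtain ⟨hj0ne, hj0mx⟩ := Finset.mem_erase.mp hj0
      obtain ⟨C, hC, hjC, hmax⟩ := mem_mx.mp hj0mx
      have hlC : Fin.last n ∉ C := fun hlC =>
        hj0ne (le_antisymm (Fin.le_last j0) (hmax _ hlC))
      refine ⟨extB C, Finset.mem_image.mpr ⟨C, hC, rfl⟩, ?_, ?_⟩
      · rw [extB_of_not_mem hlC]
        exact castSucc_mem_upB.mpr hjC
      · rw [extB_of_not_mem hlC]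
        intro x hx
        obtain ⟨x0, hx0, rfl⟩ := mem_upB.mp hx
        exact Fin.castSucc_le_castSucc_iff.mpr (hmax _ hx0)

lemma isPartition_ext {π : Finset (Finset (Fin (n+1)))} (h : IsPartition π) :
    IsPartition (π.image extB) := by
  constructor
  · intro B hB
    obtain ⟨C, hC, rfl⟩ := Finset.mem_image.mp hB
    exact extB_nonempty (h.1 C hC)
  · intro i
    rcases eq_or_ne i (Fin.last (n+1)) with rfl | hi
    · obtain ⟨B0, ⟨hB0, hlB0⟩, hu⟩ := h.2 (Fin.last n)
      refine ⟨extB B0, ⟨Finset.mem_image.mpr ⟨B0, hB0, rfl⟩, mem_extB_last.mpr hlB0⟩, ?_⟩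
      rintro C ⟨hC, hlC⟩
      obtain ⟨D, hD, rfl⟩ := Finset.mem_image.mp hC
      rw [hu D ⟨hD, mem_extB_last.mp hlC⟩]
    · obtain ⟨j, rfl⟩ := Fin.eq_castSucc_of_ne_last hi
      obtain ⟨B, ⟨hB, hjB⟩, hu⟩ := h.2 j
      refine ⟨extB B, ⟨Finset.mem_image.mpr ⟨B, hB, rfl⟩, castSucc_mem_extB.mpr hjB⟩, ?_⟩
      rintro C ⟨hC, hjC⟩
      obtain ⟨D, hD, rfl⟩ := Finset.mem_image.mp hC
      rw [hu D ⟨hD, castSucc_mem_extB.mp hjC⟩]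

lemma isInterval_ext {π : Finset (Finset (Fin (n+1)))} (hI : IsIntervalPartition π) :
    IsIntervalPartition (π.image extB) := by
  intro B hB i hi j hj k hik hkj
  obtain ⟨C, hC, rfl⟩ := Finset.mem_image.mp hB
  rcases eq_or_ne k (Fin.last (n+1)) with rfl | hk
  · have : Fin.last (n+1) = j := le_antisymm hkj (Fin.le_last j)
    exact this ▸ hj
  · obtain ⟨k0, rfl⟩ := Fin.eq_castSucc_of_ne_last hk
    have hine : i ≠ Fin.last (n+1) := by
      rintro rfl
      exact absurd (hik.trans_lt (Fin.castSucc_lt_last k0)) (lt_irrefl _)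
    obtain ⟨i0, rfl⟩ := Fin.eq_castSucc_of_ne_last hine
    have hi0 : i0 ∈ C := castSucc_mem_extB.mp hi
    by_cases hlC : Fin.last n ∈ C
    · refine castSucc_mem_extB.mpr (hI C hC i0 hi0 (Fin.last n) hlC k0
        (Fin.castSucc_le_castSucc_iff.mp hik) (Fin.le_last k0))
    · rw [extB_of_not_mem hlC] at hj ⊢
      obtain ⟨j0, hj0, rfl⟩ := mem_upB.mp hj
      exact castSucc_mem_upB.mpr (hI C hC i0 hi0 j0 hj0 k0
        (Fin.castSucc_le_castSucc_iff.mp hik) (Fin.castSucc_le_castSucc_iff.mp hkj))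

lemma extB_ne_singleton_last {C : Finset (Fin (n+1))} (hne : C.Nonempty) :
    extB C ≠ {Fin.last (n+1)} := by
  intro he
  by_cases h : Fin.last n ∈ C
  · rw [extB_of_mem h] at he
    obtain ⟨x, hx⟩ := upB_nonempty hne
    have hxmem : x ∈ ({Fin.last (n+1)} : Finset (Fin (n+2))) :=
      he ▸ Finset.mem_insert_of_mem hx
    rw [Finset.mem_singleton] at hxmem
    subst hxmem
    exact last_not_mem_upB hx
  · rw [extB_of_not_mem h] at he
    have : Fin.last (n+1) ∈ upB C := he ▸ Finset.mem_singleton_self _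
    exact last_not_mem_upB this

end Chunk7a

section Chunk7b
variable {n : ℕ} {M : Type*} [Ring M] [Algebra ℂ M]

lemma snoc_ne_last (a : Fin (n+2) → M) {i : Fin (n+1)} (hi : i ≠ Fin.last n) :
    (Fin.snoc (Fin.init (Fin.init a))
        (a (Fin.last n).castSucc * a (Fin.last (n+1))) : Fin (n+1) → M) i
      = a i.castSucc := by
  obtain ⟨j, rfl⟩ := Fin.eq_castSucc_of_ne_last hi
  rw [Fin.snoc_castSucc]
  rfl

lemma aProd_upB_snoc (a : Fin (n+2) → M) {U : Finset (Fin (n+1))}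
    (hl : Fin.last n ∉ U) :
    aProd a (upB U)
      = aProd (Fin.snoc (Fin.init (Fin.init a))
          (a (Fin.last n).castSucc * a (Fin.last (n+1)))) U := by
  rw [aProd_upB]
  exact aProd_congr fun i hi => (snoc_ne_last a (fun he => hl (he ▸ hi))).symm

lemma aProd_extB (a : Fin (n+2) → M) {B0 : Finset (Fin (n+1))}
    (hl : Fin.last n ∈ B0) :
    aProd a (extB B0)
      = aProd (Fin.snoc (Fin.init (Fin.init a))
          (a (Fin.last n).castSucc * a (Fin.last (n+1)))) B0 := by
  set a' : Fin (n+1) → M := Fin.snoc (Fin.init (Fin.init a))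
      (a (Fin.last n).castSucc * a (Fin.last (n+1))) with ha'
  rw [extB_of_mem hl,
    aProd_erase_max a (Finset.mem_insert_self _ _) (fun x _ => Fin.le_last x),
    Finset.erase_insert last_not_mem_upB, aProd_upB,
    aProd_erase_max (fun i => a i.castSucc) hl (fun x _ => Fin.le_last x)]
  conv_rhs => rw [aProd_erase_max a' hl (fun x _ => Fin.le_last x)]
  rw [mul_assoc]
  congr 1
  · exact aProd_congr fun i hi =>
      (snoc_ne_last a (Finset.mem_erase.mp hi).1).symm
  · rw [ha', Fin.snoc_last]

lemma prod_map_ext (a : Fin (n+2) → M) {π S : Finset (Finset (Fin (n+1)))}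
    (h1 : IsPartition π) (hS : S ⊆ π) {B0 : Finset (Fin (n+1))}
    (hB0 : B0 ∈ S) (hl : Fin.last n ∈ B0) :
    ((maxElts (S.image extB)).map fun v =>
        TensorAlgebra.ι ℂ (aProd a (blockOf (S.image extB) v))).prod
      = ((maxElts S).map fun v =>
          TensorAlgebra.ι ℂ (aProd (Fin.snoc (Fin.init (Fin.init a))
            (a (Fin.last n).castSucc * a (Fin.last (n+1)))) (blockOf S v))).prod := by
  have hmxl : Fin.last n ∈ mx S := mem_mx_of_block hB0 hl
  have hsort : maxElts (S.image extB)
      = (((mx S).erase (Fin.last n)).sort (· ≤ ·)).map Fin.castSucc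
          ++ [Fin.last (n+1)] := by
    rw [maxElts_eq_sort_mx, mx_image_ext h1 hS hB0 hl,
      sort_eq_append_max (Finset.mem_insert_self _ _) (fun x _ => Fin.le_last x),
      Finset.erase_insert last_not_mem_upB]
    exact congrArg (· ++ [Fin.last (n+1)]) (sort_map_castSucc _)
  have hsortS : maxElts S
      = ((mx S).erase (Fin.last n)).sort (· ≤ ·) ++ [Fin.last n] := by
    rw [maxElts_eq_sort_mx]
    exact sort_eq_append_max hmxl (fun x _ => Fin.le_last x)
  rw [hsort, hsortS, List.map_append, List.map_append, List.prod_append,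
    List.prod_append, List.map_map]
  congr 1
  · refine congrArg List.prod (List.map_congr_left fun v hv => ?_)
    have hv' := (Finset.mem_sort (α := Fin (n+1)) (· ≤ ·)).mp hv
    obtain ⟨hvne, hvmx⟩ := Finset.mem_erase.mp hv'
    have hblock : ∀ B ∈ S, v ∈ B → Fin.last n ∉ B := by
      intro B hB hvB hlB
      obtain ⟨B', hB', hvB', hmax⟩ := mem_mx.mp hvmx
      have : B = B' := part_eq h1 (hS hB) (hS hB') hvB hvB'
      subst this
      exact hvne (le_antisymm (Fin.le_last v) (hmax _ hlB))
    have hbl : Fin.last n ∉ blockOf S v := by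
      intro hmem
      obtain ⟨B, hB, hvB, hlB⟩ := mem_blockOf.mp hmem
      exact hblock B hB hvB hlB
    simp only [Function.comp_apply]
    rw [blockOf_image_ext_castSucc hblock, aProd_upB_snoc a hbl]
  · simp only [List.map_cons, List.map_nil, List.prod_cons, List.prod_nil, mul_one]
    rw [blockOf_image_ext_last hB0 hl
        (fun B hB hlB => part_eq h1 (hS hB) (hS hB0) hlB hl),
      aProd_extB a hl, blockOf_eq h1 hS hB0 hl]

end Chunk7b

section Chunk7c
variable {n : ℕ} {M : Type*} [Ring M] [Algebra ℂ M]

lemma good_ext {p : Finset (Finset (Fin (n+1))) × Finset (Finset (Fin (n+1)))}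
    (hg : good (n+1) p) (hc : cls n p) :
    good (n+2) (p.1.image extB, p.2.image extB)
      ∧ cls (n+1) (p.1.image extB, p.2.image extB)
      ∧ {Fin.last (n+1)} ∉ p.2.image extB := by
  obtain ⟨h1, h2, h3, h4⟩ := hg
  obtain ⟨B0, hB0S, hlB0⟩ := hc
  refine ⟨⟨isPartition_ext h1, isInterval_ext h2, Finset.image_subset_image h3, ?_⟩,
    ⟨extB B0, Finset.mem_image.mpr ⟨B0, hB0S, rfl⟩, mem_extB_last.mpr hlB0⟩, ?_⟩
  · intro U hU hUS
    obtain ⟨C, hC, rfl⟩ := Finset.mem_image.mp hU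
    have hCS : C ∉ p.2 := fun hmem => hUS (Finset.mem_image.mpr ⟨C, hmem, rfl⟩)
    have hlC : Fin.last n ∉ C := fun hlC =>
      hCS (part_eq h1 hC (h3 hB0S) hlC hlB0 ▸ hB0S)
    rw [extB_of_not_mem hlC, upB_card]
    exact h4 C hC hCS
  · intro hmem
    obtain ⟨C, hCS, hCe⟩ := Finset.mem_image.mp hmem
    exact extB_ne_singleton_last (h1.1 C (h3 hCS)) hCe

lemma downP_image_extP {π : Finset (Finset (Fin (n+1)))} (hne : ∅ ∉ π) :
    downP (π.image extB) = π := by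
  rw [downP, Finset.image_image,
    Finset.image_congr (f := downB ∘ extB) (g := id) (fun C _ => downB_extB C),
    Finset.image_id]
  exact Finset.erase_eq_of_notMem hne

lemma good_down_C {p : Finset (Finset (Fin (n+2))) × Finset (Finset (Fin (n+2)))}
    (hg : good (n+2) p) (hc : cls (n+1) p) (hsng : {Fin.last (n+1)} ∉ p.2) :
    (good (n+1) (downP p.1, downP p.2) ∧ cls n (downP p.1, downP p.2))
      ∧ (downP p.1).image extB = p.1 ∧ (downP p.2).image extB = p.2 := by
  obtain ⟨h1, h2, h3, h4⟩ := hg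
  obtain ⟨B'', hB''S, hlB''⟩ := hc
  have hB''π : B'' ∈ p.1 := h3 hB''S
  have hB''ne : B'' ≠ {Fin.last (n+1)} := fun he => hsng (he ▸ hB''S)
  have hcs : (Fin.last n).castSucc ∈ B'' := csl_mem_of_big h2 hB''π hlB'' hB''ne
  have hul : ∀ B ∈ p.1, Fin.last (n+1) ∈ B → B = B'' :=
    fun B hB hl => part_eq h1 hB hB''π hl hlB''
  have huc : ∀ B ∈ p.1, (Fin.last n).castSucc ∈ B → B = B'' :=
    fun B hB hl => part_eq h1 hB hB''π hl hcs
  have hrec : ∀ B ∈ p.1, extB (downB B) = B := by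
    intro B hB
    by_cases hBB : B = B''
    · subst hBB
      exact extB_downB_of_mem hlB'' hcs
    · exact extB_downB_of_not_mem (fun h => hBB (hul B hB h))
        (fun h => hBB (huc B hB h))
  have hdne : ∀ B ∈ p.1, (downB B).Nonempty := by
    intro B hB
    by_cases hBB : B = B''
    · subst hBB
      exact ⟨Fin.last n, mem_downB.mpr hcs⟩
    · exact downB_nonempty (h1.1 B hB) (fun h => hBB (hul B hB h))
  have hd1 : downP p.1 = p.1.image downB := by
    apply Finset.erase_eq_of_notMem
    intro hmem
    obtain ⟨B, hB, hBe⟩ := Finset.mem_image.mp hmem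
    have := hdne B hB
    rw [hBe] at this
    exact Finset.not_nonempty_empty this
  have hd2 : downP p.2 = p.2.image downB := by
    apply Finset.erase_eq_of_notMem
    intro hmem
    obtain ⟨B, hB, hBe⟩ := Finset.mem_image.mp hmem
    have := hdne B (h3 hB)
    rw [hBe] at this
    exact Finset.not_nonempty_empty this
  have hrec1 : (downP p.1).image extB = p.1 := by
    rw [hd1, Finset.image_image]
    rw [Finset.image_congr (f := extB ∘ downB) (g := id) (fun B hB => hrec B hB)]
    exact Finset.image_id
  have hrec2 : (downP p.2).image extB = p.2 := by
    rw [hd2, Finset.image_image]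
    rw [Finset.image_congr (f := extB ∘ downB) (g := id) (fun B hB => hrec B (h3 hB))]
    exact Finset.image_id
  refine ⟨⟨⟨⟨?_, ?_⟩, ?_, ?_, ?_⟩, ?_⟩, hrec1, hrec2⟩
  · show ∀ B ∈ downP p.1, B.Nonempty
    rw [hd1]
    intro B hB
    obtain ⟨C, hC, rfl⟩ := Finset.mem_image.mp hB
    exact hdne C hC
  · show ∀ i : Fin (n+1), ∃! B, B ∈ downP p.1 ∧ i ∈ B
    rw [hd1]
    intro i
    obtain ⟨B, ⟨hB, hiB⟩, hu⟩ := h1.2 i.castSucc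
    refine ⟨downB B, ⟨Finset.mem_image.mpr ⟨B, hB, rfl⟩, mem_downB.mpr hiB⟩, ?_⟩
    rintro C ⟨hC, hiC⟩
    obtain ⟨D, hD, rfl⟩ := Finset.mem_image.mp hC
    rw [hu D ⟨hD, mem_downB.mp hiC⟩]
  · show IsIntervalPartition (downP p.1)
    rw [hd1]
    intro B hB i hi j hj k hik hkj
    obtain ⟨C, hC, rfl⟩ := Finset.mem_image.mp hB
    exact mem_downB.mpr (h2 C hC i.castSucc (mem_downB.mp hi) j.castSucc
      (mem_downB.mp hj) k.castSucc (Fin.castSucc_le_castSucc_iff.mpr hik)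
      (Fin.castSucc_le_castSucc_iff.mpr hkj))
  · show downP p.2 ⊆ downP p.1
    rw [hd1, hd2]
    exact Finset.image_subset_image h3
  · show ∀ U ∈ downP p.1, U ∉ downP p.2 → U.card = 1
    intro U hU hUS
    rw [hd1] at hU
    obtain ⟨B, hB, rfl⟩ := Finset.mem_image.mp hU
    have hBS : B ∉ p.2 := by
      intro hBS
      apply hUS
      rw [hd2]
      exact Finset.mem_image.mpr ⟨B, hBS, rfl⟩
    obtain ⟨x, rfl⟩ := Finset.card_eq_one.mp (h4 B hB hBS)
    have hxne : x ≠ Fin.last (n+1) := by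
      rintro rfl
      exact hBS (hul _ hB (Finset.mem_singleton_self _) ▸ hB''S)
    obtain ⟨y, rfl⟩ := Fin.eq_castSucc_of_ne_last hxne
    rw [downB_singleton_castSucc]
    exact Finset.card_singleton y
  · refine ⟨downB B'', ?_, mem_downB.mpr hcs⟩
    rw [hd2]
    exact Finset.mem_image.mpr ⟨B'', hB''S, rfl⟩

lemma extB_card (S : Finset (Finset (Fin (n+1)))) : (S.image extB).card = S.card :=
  Finset.card_image_of_injective _ extB_injective

lemma prod_sdiff_ext (E : M →ₗ[ℂ] ℂ) (a : Fin (n+2) → M)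
    {π S : Finset (Finset (Fin (n+1)))} (h1 : IsPartition π) (hS : S ⊆ π)
    {B0 : Finset (Fin (n+1))} (hB0 : B0 ∈ S) (hl : Fin.last n ∈ B0) :
    (∏ U ∈ (π.image extB) \ (S.image extB), E (aProd a U))
      = ∏ U ∈ π \ S, E (aProd (Fin.snoc (Fin.init (Fin.init a))
          (a (Fin.last n).castSucc * a (Fin.last (n+1)))) U) := by
  rw [← Finset.image_sdiff _ _ extB_injective,
    Finset.prod_image (fun x _ y _ h => extB_injective h)]
  refine Finset.prod_congr rfl fun U hU => ?_
  obtain ⟨hUπ, hUS⟩ := Finset.mem_sdiff.mp hU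
  have hlU : Fin.last n ∉ U := fun hlU =>
    hUS (part_eq h1 hUπ (hS hB0) hlU hl ▸ hB0)
  rw [extB_of_not_mem hlU, aProd_upB_snoc a hlU]

lemma sum_openBig (E : M →ₗ[ℂ] ℂ) (a : Fin (n+2) → M) :
    ∑ p ∈ Finset.univ.filter (fun p => good (n+2) p ∧ cls (n+1) p
        ∧ {Fin.last (n+1)} ∉ p.2), trm E (n+2) a p
      = - ∑ p ∈ Finset.univ.filter (fun p => good (n+1) p ∧ cls n p),
          trm E (n+1) (Fin.snoc (Fin.init (Fin.init a))
            (a (Fin.last n).castSucc * a (Fin.last (n+1)))) p := by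
  rw [← Finset.sum_neg_distrib]
  symm
  refine Finset.sum_nbij' (i := fun p => (p.1.image extB, p.2.image extB))
    (j := fun p => (downP p.1, downP p.2)) ?_ ?_ ?_ ?_ ?_
  · intro p hp
    obtain ⟨_, hg, hc⟩ := Finset.mem_filter.mp hp
    exact Finset.mem_filter.mpr ⟨Finset.mem_univ _, good_ext hg hc⟩
  · intro p hp
    obtain ⟨_, hg, hc, hsng⟩ := Finset.mem_filter.mp hp
    exact Finset.mem_filter.mpr ⟨Finset.mem_univ _, (good_down_C hg hc hsng).1⟩
  · intro p hp
    obtain ⟨_, hg, hc⟩ := Finset.mem_filter.mp hp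
    have hne1 : ∅ ∉ p.1 := fun h => Finset.not_nonempty_empty (hg.1.1 ∅ h)
    have hne2 : ∅ ∉ p.2 := fun h => hne1 (hg.2.2.1 h)
    exact Prod.ext (downP_image_extP hne1) (downP_image_extP hne2)
  · intro p hp
    obtain ⟨_, hg, hc, hsng⟩ := Finset.mem_filter.mp hp
    obtain ⟨_, hr1, hr2⟩ := good_down_C hg hc hsng
    exact Prod.ext hr1 hr2
  · intro p hp
    obtain ⟨_, hg, hc⟩ := Finset.mem_filter.mp hp
    obtain ⟨B0, hB0S, hlB0⟩ := hc
    rw [trm, trm, extB_card]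
    rw [prod_sdiff_ext E a hg.1 hg.2.2.1 hB0S hlB0,
      prod_map_ext a hg.1 hg.2.2.1 hB0S hlB0]
    have hle : p.2.card ≤ n + 1 := card_le_of_subset_part hg.1 hg.2.2.1
    rw [← neg_smul]
    congr 1
    rw [show n + 2 - p.2.card = (n + 1 - p.2.card) + 1 from by omega, pow_succ]
    ring

end Chunk7c

section Chunk8
variable {n : ℕ} {M : Type*} [Ring M] [Algebra ℂ M]

lemma RHS_split (E : M →ₗ[ℂ] ℂ) (a : Fin (n+1) → M) :
    RHS E (n+1) a
      = ∑ p ∈ Finset.univ.filter (fun p => good (n+1) p ∧ ¬ cls n p), trm E (n+1) a p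
        + ∑ p ∈ Finset.univ.filter (fun p => good (n+1) p ∧ cls n p),
            trm E (n+1) a p := by
  rw [RHS,
    show (Finset.univ.filter (fun p => good (n+1) p ∧ ¬ cls n p))
      = (Finset.univ.filter (good (n+1))).filter (fun p => ¬ cls n p) from by
        rw [Finset.filter_filter],
    show (Finset.univ.filter (fun p => good (n+1) p ∧ cls n p))
      = (Finset.univ.filter (good (n+1))).filter (fun p => cls n p) from by
        rw [Finset.filter_filter]]
  exact ((add_comm _ _).trans
    (Finset.sum_filter_add_sum_filter_not _ (fun p => cls n p) _)).symm

lemma cls_split (E : M →ₗ[ℂ] ℂ) (a : Fin (n+1) → M) :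
    ∑ p ∈ Finset.univ.filter (fun p => good (n+1) p ∧ cls n p), trm E (n+1) a p
      = ∑ p ∈ Finset.univ.filter (fun p => good (n+1) p ∧ {Fin.last n} ∈ p.2),
          trm E (n+1) a p
        + ∑ p ∈ Finset.univ.filter (fun p => good (n+1) p ∧ cls n p
            ∧ {Fin.last n} ∉ p.2), trm E (n+1) a p := by
  have h1 : (Finset.univ.filter (fun p => good (n+1) p ∧ {Fin.last n} ∈ p.2))
      = (Finset.univ.filter (fun p => good (n+1) p ∧ cls n p)).filter
          (fun p => {Fin.last n} ∈ p.2) := by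
    ext p
    simp only [Finset.mem_filter, Finset.mem_univ, true_and]
    constructor
    · rintro ⟨hg, hl⟩
      exact ⟨⟨hg, ⟨{Fin.last n}, hl, Finset.mem_singleton_self _⟩⟩, hl⟩
    · rintro ⟨⟨hg, _⟩, hl⟩
      exact ⟨hg, hl⟩
  have h2 : (Finset.univ.filter (fun p => good (n+1) p ∧ cls n p ∧ {Fin.last n} ∉ p.2))
      = (Finset.univ.filter (fun p => good (n+1) p ∧ cls n p)).filter
          (fun p => ¬ ({Fin.last n} ∈ p.2)) := by
    ext p
    simp only [Finset.mem_filter, Finset.mem_univ, true_and]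
    tauto
  rw [h1, h2]
  exact (Finset.sum_filter_add_sum_filter_not _ _ _).symm

lemma cls_one_empty (E : M →ₗ[ℂ] ℂ) (a : Fin 1 → M) :
    ∑ p ∈ Finset.univ.filter (fun p => good 1 p ∧ cls 0 p ∧ {Fin.last 0} ∉ p.2),
        trm E 1 a p = 0 := by
  rw [Finset.filter_false_of_mem, Finset.sum_empty]
  rintro p _ ⟨_, ⟨B, hBS, hlB⟩, hsng⟩
  have hB : B = {Fin.last 0} := by
    ext x
    have hx : x = Fin.last 0 := Fin.ext (by omega)
    subst hx
    exact iff_of_true hlB (Finset.mem_singleton_self _)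
  exact hsng (hB ▸ hBS)

lemma RHS_one (E : M →ₗ[ℂ] ℂ) (a : Fin 1 → M) :
    RHS E 1 a = RHS E 0 (Fin.init a) * TensorAlgebra.ι ℂ (a 0)
      - E (a 0) • RHS E 0 (Fin.init a) := by
  have h0 : (Fin.last 0 : Fin 1) = 0 := rfl
  rw [RHS_split E a, sum_closed E a, cls_split E a, sum_openSingleton E a,
    cls_one_empty E a, h0, neg_smul]
  abel

lemma RHS_succ_succ (E : M →ₗ[ℂ] ℂ) (a : Fin (n+2) → M) :
    RHS E (n+2) a
      = RHS E (n+1) (Fin.init a) * TensorAlgebra.ι ℂ (a (Fin.last (n+1)))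
        - E (a (Fin.last (n+1))) • RHS E (n+1) (Fin.init a)
        - RHS E (n+1) (Fin.snoc (Fin.init (Fin.init a))
            (a (Fin.last n).castSucc * a (Fin.last (n+1))))
        - E (a (Fin.last n).castSucc * a (Fin.last (n+1))) •
            RHS E n (Fin.init (Fin.init a)) := by
  set a' : Fin (n+1) → M := Fin.snoc (Fin.init (Fin.init a))
      (a (Fin.last n).castSucc * a (Fin.last (n+1))) with ha'
  have hsplit' : ∑ p ∈ Finset.univ.filter (fun p => good (n+1) p ∧ cls n p),
      trm E (n+1) a' p
        = RHS E (n+1) a'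
          - ∑ p ∈ Finset.univ.filter (fun p => good (n+1) p ∧ ¬ cls n p),
              trm E (n+1) a' p := by
    rw [RHS_split E a']
    abel
  have hlast : a' (Fin.last n) = a (Fin.last n).castSucc * a (Fin.last (n+1)) := by
    rw [ha', Fin.snoc_last]
  have hinit : Fin.init a' = Fin.init (Fin.init a) := by
    rw [ha', Fin.init_snoc]
  rw [RHS_split E a, sum_closed E a, cls_split E a, sum_openSingleton E a,
    sum_openBig E a, ← ha', hsplit', sum_closed E a', hlast, hinit, neg_smul, neg_smul]
  abel

end Chunk8

end Stmt14Aux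

theorem stmt14 {M : Type*} [Ring M] [Algebra ℂ M] (E : M →ₗ[ℂ] ℂ)
    (W : (m : ℕ) → (Fin m → M) → TensorAlgebra ℂ M)
    (hW0 : ∀ a : Fin 0 → M, W 0 a = 1)
    (hW1 : ∀ a : Fin 1 → M,
      W 1 a = W 0 (Fin.init a) * TensorAlgebra.ι ℂ (a 0)
        - E (a 0) • W 0 (Fin.init a))
    (hWrec : ∀ (m : ℕ) (a : Fin (m + 2) → M),
      W (m + 2) a =
        W (m + 1) (Fin.init a) * TensorAlgebra.ι ℂ (a (Fin.last (m + 1)))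
          - E (a (Fin.last (m + 1))) • W (m + 1) (Fin.init a)
          - W (m + 1) (Fin.snoc (Fin.init (Fin.init a))
              (a (Fin.last m).castSucc * a (Fin.last (m + 1))))
          - E (a (Fin.last m).castSucc * a (Fin.last (m + 1))) •
              W m (Fin.init (Fin.init a)))
    (n : ℕ) (a : Fin n → M) :
    W n a
      = ∑ π ∈ Finset.univ.filter (fun π : Finset (Finset (Fin n)) =>
            IsPartition π ∧ IsIntervalPartition π),
          ∑ S ∈ π.powerset.filter (fun S => ∀ U ∈ π, U ∉ S → U.card = 1),
            ((-1 : ℂ) ^ (n - S.card) * ∏ U ∈ π \ S, E (aProd a U)) •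
              ((maxElts S).map fun v =>
                TensorAlgebra.ι ℂ (aProd a (blockOf S v))).prod := by
  rw [Stmt14Aux.sum_eq_RHS E a]
  suffices H : ∀ m : ℕ, (∀ b : Fin m → M, W m b = Stmt14Aux.RHS E m b)
      ∧ (∀ b : Fin (m+1) → M, W (m+1) b = Stmt14Aux.RHS E (m+1) b) from (H n).1 a
  intro m
  induction m with
  | zero =>
    constructor
    · intro b
      rw [hW0, Stmt14Aux.RHS_zero]
    · intro b
      rw [hW1 b, hW0, Stmt14Aux.RHS_one, Stmt14Aux.RHS_zero]
  | succ m ih =>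
    refine ⟨ih.2, fun b => ?_⟩
    rw [hWrec m b, ih.2 (Fin.init b), ih.2 _, ih.1 (Fin.init (Fin.init b)),
      Stmt14Aux.RHS_succ_succ]
end
end
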